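/- arXiv:1111.5966 — 2 statements merged into one kernel-verified Lean document; each statement's English description precedes it below -/
import Mathlib

section
/- Let S_j (j ∈ ℤ) be local potentials satisfying conditions A–E. For all (p,q) ∈ ℕ×ℤ with p ≥ 1, the collection of (p,q)-minimizers is nonempty, closed under pointwise convergence, shift-invariant, and strictly ordered (any two distinct (p,q)-minimizers x,y satisfy x ≪ y or y ≪ x, where x ≪ y means x_i < y_i for all i). In particular every (p,q)-minimizer is a Birkhoff sequence. Moreover, x ∈ X_{p,q} is a (p,q)-minimizer if and only if it is an (np,nq)-minimizer for every n ∈ ℕ with n ≥ 1, if and only if it is a global minimizer. -/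
open Filter Topology

/-- The shift map `τ_{k,l}`: `(τ_{k,l} x) i = x (i - k) + l`. -/
def tau (k l : ℤ) (x : ℤ → ℝ) : ℤ → ℝ := fun i => x (i - k) + (l : ℝ)

/-- A sequence is Birkhoff (well-ordered) if its integer translates are totally ordered
in the pointwise partial order. -/
def Birkhoff (x : ℤ → ℝ) : Prop :=
  ∀ k l k' l' : ℤ, tau k l x ≤ tau k' l' x ∨ tau k' l' x ≤ tau k l x

/-- `x` has rotation number `ω` if `x n / n → ω` as `n → ±∞`. -/
def HasRotNum (x : ℤ → ℝ) (ω : ℝ) : Prop :=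
  Tendsto (fun n : ℤ => x n / (n : ℝ)) atTop (𝓝 ω) ∧
  Tendsto (fun n : ℤ => x n / (n : ℝ)) atBot (𝓝 ω)

/-- A Birkhoff sequence of rotation number `ω` is maximally periodic if `τ_{k,l} x = x`
whenever `-ω k + l = 0`. -/
def MaxPeriodic (ω : ℝ) (x : ℤ → ℝ) : Prop :=
  ∀ k l : ℤ, -ω * (k : ℝ) + (l : ℝ) = 0 → tau k l x = x

/-- Partial derivative of a function on sequence space with respect to coordinate `i`. -/
noncomputable def pd (F : (ℤ → ℝ) → ℝ) (i : ℤ) : (ℤ → ℝ) → ℝ :=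
  fun x => deriv (fun t => F (Function.update x i t)) (x i)

/-- Iterated partial derivatives along a list of coordinates. -/
noncomputable def pdList (F : (ℤ → ℝ) → ℝ) : List ℤ → (ℤ → ℝ) → ℝ
  | [] => F
  | i :: L => pd (pdList F L) i

/-- `F` and `G` are `ε`-close in the `C^k` norm: all iterated partial derivatives of order
`≤ k` of the difference are bounded by `ε`. -/
def CkClose (k : ℕ) (ε : ℝ) (F G : (ℤ → ℝ) → ℝ) : Prop :=
  ∀ L : List ℤ, L.length ≤ k → ∀ x : ℤ → ℝ, |pdList (fun y => F y - G y) L x| ≤ ε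

/-- Conditions A-E on a family of local potentials `S j : ℝ^ℤ → ℝ`, with range `r` and
uniform derivative bound `C`. -/
structure SatisfiesAE (r : ℕ) (C : ℝ) (S : ℤ → (ℤ → ℝ) → ℝ) : Prop where
  r_pos : 1 ≤ r
  C_pos : 0 < C
  /- A: finite range -/
  finRange : ∀ j : ℤ, ∀ x y : ℤ → ℝ, (∀ i : ℤ, |i - j| ≤ (r : ℤ) → x i = y i) → S j x = S j y
  /- A: C² smoothness -/
  contS : ∀ j : ℤ, Continuous (S j)
  diff1 : ∀ j i : ℤ, ∀ x : ℤ → ℝ, DifferentiableAt ℝ (fun t => S j (Function.update x i t)) (x i)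
  diff2 : ∀ j i k : ℤ, ∀ x : ℤ → ℝ,
    DifferentiableAt ℝ (fun t => pd (S j) i (Function.update x k t)) (x k)
  cont1 : ∀ j i : ℤ, Continuous (pd (S j) i)
  cont2 : ∀ j i k : ℤ, Continuous (pd (pd (S j) i) k)
  /- B: shift invariance -/
  shiftInv : ∀ j k l : ℤ, ∀ x : ℤ → ℝ, S j x = S (j + k) (tau k l x)
  /- C: coercivity -/
  coercive : ∀ j k : ℤ, |k - j| = 1 → ∀ M : ℝ, ∃ R : ℝ, ∀ x : ℤ → ℝ, R ≤ |x k - x j| → M ≤ S j x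
  /- D: monotonicity -/
  mono : ∀ j i k : ℤ, i ≠ k → ∀ x : ℤ → ℝ, pd (pd (S j) i) k x ≤ 0
  monoStrict : ∀ j k : ℤ, |j - k| = 1 → ∀ x : ℤ → ℝ, pd (pd (S j) j) k x < 0
  /- E: bounded derivatives -/
  bdd1 : ∀ j i : ℤ, ∀ x : ℤ → ℝ, |pd (S j) i x| ≤ C
  bdd2 : ∀ j i k : ℤ, ∀ x : ℤ → ℝ, |pd (pd (S j) i) k x| ≤ C

/-- The periodic action `W_p(x) = ∑_{j=1}^p S_j(x)`. -/
noncomputable def Wper (S : ℤ → (ℤ → ℝ) → ℝ) (p : ℕ) (x : ℤ → ℝ) : ℝ :=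
  ∑ j ∈ Finset.Icc (1 : ℤ) (p : ℤ), S j x

/-- A `(p,q)`-periodic minimizer: `τ_{p,q} x = x` and `x` minimizes `W_p` over `X_{p,q}`. -/
def PerMin (S : ℤ → (ℤ → ℝ) → ℝ) (p : ℕ) (q : ℤ) (x : ℤ → ℝ) : Prop :=
  tau (p : ℤ) q x = x ∧ ∀ y : ℤ → ℝ, tau (p : ℤ) q y = y → Wper S p x ≤ Wper S p y

/-- The (formally convergent, by finite range) energy difference `W(x+y) - W(x)`. -/
noncomputable def Wdiff (S : ℤ → (ℤ → ℝ) → ℝ) (x y : ℤ → ℝ) : ℝ :=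
  ∑' j : ℤ, (S j (fun i => x i + y i) - S j x)

/-- `x` is a global minimizer: every finite-support variation does not decrease the energy. -/
def GlobalMin (S : ℤ → (ℤ → ℝ) → ℝ) (x : ℤ → ℝ) : Prop :=
  ∀ y : ℤ → ℝ, (Function.support y).Finite → 0 ≤ Wdiff S x y

/-- The extended orbit `Σ_y = { y k + l : k, l ∈ ℤ }`. -/
def extOrbit (y : ℤ → ℝ) : Set ℝ := {ξ : ℝ | ∃ k l : ℤ, ξ = y k + (l : ℝ)}

section AM

variable {r : ℕ} {C : ℝ} {S : ℤ → (ℤ → ℝ) → ℝ}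

lemma tau_apply (k l : ℤ) (x : ℤ → ℝ) (i : ℤ) : tau k l x i = x (i - k) + l := rfl

lemma tau_congr {k l k' l' : ℤ} (x : ℤ → ℝ) (hk : k = k') (hl : l = l') :
    tau k l x = tau k' l' x := by rw [hk, hl]

lemma tau_tau (k l k' l' : ℤ) (x : ℤ → ℝ) :
    tau k l (tau k' l' x) = tau (k + k') (l + l') x := by
  funext i
  show x (i - k - k') + (l' : ℝ) + l = x (i - (k + k')) + ((l + l' : ℤ) : ℝ)
  rw [show i - k - k' = i - (k + k') by ring]
  push_cast; ring

lemma tau_zero (x : ℤ → ℝ) : tau 0 0 x = x := by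
  funext i; show x (i - 0) + ((0:ℤ):ℝ) = x i; simp

lemma per_neg {p q : ℤ} {x : ℤ → ℝ} (h : tau p q x = x) : tau (-p) (-q) x = x := by
  have h2 := tau_tau (-p) (-q) p q x
  rw [h, neg_add_cancel, neg_add_cancel, tau_zero] at h2
  exact h2

lemma per_zsmul {p q : ℤ} {x : ℤ → ℝ} (h : tau p q x = x) (m : ℤ) :
    tau (m * p) (m * q) x = x := by
  induction m using Int.induction_on with
  | zero => rw [tau_congr x (by ring : (0:ℤ) * p = 0) (by ring : (0:ℤ) * q = 0), tau_zero]
  | succ n ih =>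
      have h2 := tau_tau p q (n * p) (n * q) x
      rw [ih, h] at h2
      rw [tau_congr x (by ring : ((n:ℤ)+1) * p = p + n * p) (by ring : ((n:ℤ)+1) * q = q + n * q)]
      exact h2.symm
  | pred n ih =>
      have h2 := tau_tau (-p) (-q) (-n * p) (-n * q) x
      rw [ih, per_neg h] at h2
      rw [tau_congr x (by ring : (-(n:ℤ)-1) * p = -p + -n * p)
        (by ring : (-(n:ℤ)-1) * q = -q + -n * q)]
      exact h2.symm

lemma per_apply {p q : ℤ} {x : ℤ → ℝ} (h : tau p q x = x) (i m : ℤ) :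
    x (i + m * p) = x i + (m * q : ℤ) := by
  have h2 := congrFun (per_zsmul h m) (i + m * p)
  rw [tau_apply] at h2
  rw [show i + m * p - m * p = i by ring] at h2
  linarith [h2]

lemma tau_le_tau {x y : ℤ → ℝ} (k l : ℤ) (h : x ≤ y) : tau k l x ≤ tau k l y :=
  fun i => by simp only [tau_apply]; exact add_le_add_left (h _) _

lemma tau_inf (k l : ℤ) (x y : ℤ → ℝ) : tau k l (x ⊓ y) = tau k l x ⊓ tau k l y := by
  funext i
  show min (x (i - k)) (y (i - k)) + (l:ℝ) = min (x (i - k) + l) (y (i - k) + l)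
  rw [min_add_add_right]

lemma tau_sup (k l : ℤ) (x y : ℤ → ℝ) : tau k l (x ⊔ y) = tau k l x ⊔ tau k l y := by
  funext i
  show max (x (i - k)) (y (i - k)) + (l:ℝ) = max (x (i - k) + l) (y (i - k) + l)
  rw [max_add_add_right]

/-! ### Sums over integer intervals -/

lemma sum_Ioc_split (f : ℤ → ℝ) {a b c : ℤ} (hab : a ≤ b) (hbc : b ≤ c) :
    ∑ j ∈ Finset.Ioc a c, f j = ∑ j ∈ Finset.Ioc a b, f j + ∑ j ∈ Finset.Ioc b c, f j := by
  rw [← Finset.Ioc_union_Ioc_eq_Ioc hab hbc, Finset.sum_union]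
  rw [Finset.disjoint_left]
  intro j hj hj'
  simp only [Finset.mem_Ioc] at hj hj'
  omega

lemma Ioc_succ_singleton (a : ℤ) : Finset.Ioc a (a + 1) = {a + 1} := by
  ext j; simp only [Finset.mem_Ioc, Finset.mem_singleton]; omega

lemma sum_per_shift {f : ℤ → ℝ} {T : ℤ} (hT : 0 < T) (hf : ∀ j, f (j + T) = f j) (a : ℤ) :
    ∑ j ∈ Finset.Ioc a (a + T), f j = ∑ j ∈ Finset.Ioc 0 T, f j := by
  have step : ∀ b : ℤ, ∑ j ∈ Finset.Ioc (b + 1) (b + 1 + T), f j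
      = ∑ j ∈ Finset.Ioc b (b + T), f j := by
    intro b
    rw [show b + 1 + T = b + T + 1 by ring]
    have h1 : ∑ j ∈ Finset.Ioc b (b + T + 1), f j
        = ∑ j ∈ Finset.Ioc b (b + 1), f j + ∑ j ∈ Finset.Ioc (b + 1) (b + T + 1), f j :=
      sum_Ioc_split f (by omega) (by omega)
    have h2 : ∑ j ∈ Finset.Ioc b (b + T + 1), f j
        = ∑ j ∈ Finset.Ioc b (b + T), f j + ∑ j ∈ Finset.Ioc (b + T) (b + T + 1), f j :=
      sum_Ioc_split f (by omega) (by omega)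
    rw [Ioc_succ_singleton, Finset.sum_singleton] at h1 h2
    have h3 : f (b + T + 1) = f (b + 1) := by
      rw [show b + T + 1 = (b + 1) + T by ring, hf]
    linarith [h1, h2]
  have key : ∀ b : ℤ, ∑ j ∈ Finset.Ioc b (b + T), f j = ∑ j ∈ Finset.Ioc 0 T, f j := by
    intro b
    induction b using Int.induction_on with
    | zero => simp
    | succ n ih => rw [step n]; exact ih
    | pred n ih =>
        have := step (-(n:ℤ) - 1)
        rw [show -(n:ℤ) - 1 + 1 = -(n:ℤ) by ring] at this
        rw [← this]; exact ih
  exact key a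

lemma sum_per_mul {f : ℤ → ℝ} {T : ℤ} (hT : 0 < T) (hf : ∀ j, f (j + T) = f j) (n : ℕ) :
    ∑ j ∈ Finset.Ioc 0 ((n : ℤ) * T), f j = n * ∑ j ∈ Finset.Ioc 0 T, f j := by
  induction n with
  | zero => simp
  | succ m ih =>
      have hsplit : ∑ j ∈ Finset.Ioc 0 (((m:ℤ)+1) * T), f j
          = ∑ j ∈ Finset.Ioc 0 ((m:ℤ) * T), f j
            + ∑ j ∈ Finset.Ioc ((m:ℤ)*T) ((m:ℤ)*T + T), f j := by
        rw [show ((m:ℤ)+1) * T = (m:ℤ)*T + T by ring]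
        exact sum_Ioc_split f (by positivity) (by omega)
      push_cast
      rw [hsplit, ih, sum_per_shift hT hf]
      ring

lemma sum_bound {f : ℤ → ℝ} {B : ℝ} (a b : ℤ) (hB : ∀ j, |f j| ≤ B) :
    |∑ j ∈ Finset.Ioc a b, f j| ≤ (b - a).toNat * B := by
  calc |∑ j ∈ Finset.Ioc a b, f j| ≤ ∑ j ∈ Finset.Ioc a b, |f j| :=
        Finset.abs_sum_le_sum_abs _ _
    _ ≤ (Finset.Ioc a b).card • B := Finset.sum_le_card_nsmul _ _ _ (fun j _ => hB j)
    _ = (b - a).toNat * B := by rw [Int.card_Ioc]; simp [nsmul_eq_mul]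

end AM

section AM2

variable {r : ℕ} {C : ℝ} {S : ℤ → (ℤ → ℝ) → ℝ}

lemma update_le_update {z w : ℤ → ℝ} (h : z ≤ w) (i : ℤ) (t : ℝ) :
    Function.update z i t ≤ Function.update w i t := fun m => by
  rcases eq_or_ne m i with rfl | hm
  · simp
  · rw [Function.update_of_ne hm, Function.update_of_ne hm]; exact h m

lemma S_tau (hS : SatisfiesAE r C S) (j k l : ℤ) (x : ℤ → ℝ) :
    S j (tau k l x) = S (j - k) x := by
  have h := hS.shiftInv (j - k) k l x
  rw [show j - k + k = j by ring] at h
  exact h.symm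

lemma S_per (hS : SatisfiesAE r C S) {p q : ℤ} {x : ℤ → ℝ} (hx : tau p q x = x) (j : ℤ) :
    S (j + p) x = S j x := by
  have h := hS.shiftInv j p q x
  rw [hx] at h
  exact h.symm

lemma Wper_eq_Ioc (p : ℕ) (x : ℤ → ℝ) :
    Wper S p x = ∑ j ∈ Finset.Ioc (0 : ℤ) (p : ℤ), S j x := by
  unfold Wper; congr 1; ext j; simp only [Finset.mem_Icc, Finset.mem_Ioc]; omega

lemma Wper_continuous (hS : SatisfiesAE r C S) (p : ℕ) : Continuous (Wper S p) :=
  continuous_finset_sum _ fun j _ => hS.contS j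

lemma sum_Ioc_sub (g : ℤ → ℝ) (a b s : ℤ) :
    ∑ j ∈ Finset.Ioc a b, g (j - s) = ∑ j ∈ Finset.Ioc (a - s) (b - s), g j := by
  refine Finset.sum_nbij' (fun j => j - s) (fun j => j + s) ?_ ?_ ?_ ?_ ?_ <;>
      intro c hc <;> simp only [Finset.mem_Ioc] at hc ⊢ <;> try omega

lemma Wper_tau (hS : SatisfiesAE r C S) {p : ℕ} (hp : 1 ≤ p) {q : ℤ} {x : ℤ → ℝ}
    (hx : tau (p : ℤ) q x = x) (k l : ℤ) : Wper S p (tau k l x) = Wper S p x := by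
  have hp' : (0 : ℤ) < (p : ℤ) := by exact_mod_cast hp
  rw [Wper_eq_Ioc, Wper_eq_Ioc]
  have h1 : ∀ j ∈ Finset.Ioc (0:ℤ) (p:ℤ), S j (tau k l x) = S (j - k) x :=
    fun j _ => S_tau hS j k l x
  rw [Finset.sum_congr rfl h1]
  have hsub := sum_Ioc_sub (fun j => S j x) 0 p k
  rw [hsub]
  have hper : ∀ j : ℤ, S (j + (p:ℤ)) x = S j x := S_per hS hx
  have := sum_per_shift (f := fun j => S j x) hp' hper (-k)
  rw [show -k + (p:ℤ) = (p:ℤ) - k by ring] at this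
  rw [show (0:ℤ) - k = -k by ring]
  exact this

lemma PerMin.tau_per {p : ℕ} {q : ℤ} {x : ℤ → ℝ} (h : tau (p:ℤ) q x = x) (k l : ℤ) :
    tau (p:ℤ) q (tau k l x) = tau k l x := by
  rw [tau_tau, tau_congr x (by ring : (p:ℤ) + k = k + (p:ℤ)) (by ring : q + l = l + q),
    ← tau_tau, h]

lemma PerMin.tau (hS : SatisfiesAE r C S) {p : ℕ} (hp : 1 ≤ p) {q : ℤ} {x : ℤ → ℝ}
    (h : PerMin S p q x) (k l : ℤ) : PerMin S p q (tau k l x) := by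
  refine ⟨PerMin.tau_per h.1 k l, fun y hy => ?_⟩
  rw [Wper_tau hS hp h.1 k l]
  exact h.2 y hy

/-! ### Partial derivative calculus -/

lemma hasDerivAt_upd {F : (ℤ → ℝ) → ℝ}
    (hdiff : ∀ (z : ℤ → ℝ) (a : ℤ), DifferentiableAt ℝ (fun t => F (Function.update z a t)) (z a))
    (x : ℤ → ℝ) (a : ℤ) (s : ℝ) :
    HasDerivAt (fun t => F (Function.update x a t)) (pd F a (Function.update x a s)) s := by
  have e : (fun t => F (Function.update (Function.update x a s) a t))
      = fun t => F (Function.update x a t) := by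
    funext t; rw [Function.update_idem]
  have h2 := (hdiff (Function.update x a s) a).hasDerivAt
  rw [Function.update_self, e] at h2
  show HasDerivAt _ (deriv (fun t => F (Function.update (Function.update x a s) a t))
    (Function.update x a s a)) s
  rw [Function.update_self, e]
  exact h2

lemma deriv_upd {F : (ℤ → ℝ) → ℝ}
    (hdiff : ∀ (z : ℤ → ℝ) (a : ℤ), DifferentiableAt ℝ (fun t => F (Function.update z a t)) (z a))
    (x : ℤ → ℝ) (a : ℤ) (s : ℝ) :
    deriv (fun t => F (Function.update x a t)) s = pd F a (Function.update x a s) :=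
  (hasDerivAt_upd hdiff x a s).deriv

lemma pd_zero_of_far (hS : SatisfiesAE r C S) {j i : ℤ} (h : (r : ℤ) < |i - j|)
    (x : ℤ → ℝ) : pd (S j) i x = 0 := by
  have e : (fun t => S j (Function.update x i t)) = fun _ => S j x := by
    funext t
    refine hS.finRange j _ x (fun m hm => ?_)
    have hmi : m ≠ i := by rintro rfl; exact absurd hm (not_le.mpr h)
    rw [Function.update_of_ne hmi]
  show deriv _ _ = 0
  rw [e, deriv_const]

lemma pd_congr_local (hS : SatisfiesAE r C S) {j i : ℤ} {x y : ℤ → ℝ}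
    (hxy : ∀ m, |m - j| ≤ (r:ℤ) → m ≠ i → x m = y m) (hii : x i = y i) :
    pd (S j) i x = pd (S j) i y := by
  have e : (fun t => S j (Function.update x i t)) = fun t => S j (Function.update y i t) := by
    funext t
    refine hS.finRange j _ _ (fun m hm => ?_)
    rcases eq_or_ne m i with rfl | hmi
    · simp
    · rw [Function.update_of_ne hmi, Function.update_of_ne hmi]; exact hxy m hm hmi
  show deriv _ (x i) = deriv _ (y i)
  rw [e, hii]

lemma update_tau (k l : ℤ) (x : ℤ → ℝ) (i : ℤ) (t : ℝ) :
    tau k l (Function.update x i t) = Function.update (tau k l x) (i + k) (t + l) := by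
  funext m
  show Function.update x i t (m - k) + (l:ℝ) = _
  rcases eq_or_ne m (i + k) with rfl | hm
  · rw [show i + k - k = i by ring, Function.update_self, Function.update_self]
  · have hmk : m - k ≠ i := by omega
    rw [Function.update_of_ne hmk, Function.update_of_ne hm]
    rfl

lemma pd_shift (hS : SatisfiesAE r C S) (j i k l : ℤ) (x : ℤ → ℝ) :
    pd (S j) i x = pd (S (j + k)) (i + k) (tau k l x) := by
  have e : (fun t => S j (Function.update x i t))
      = fun t => S (j + k) (Function.update (tau k l x) (i + k) (t + (l:ℝ))) := by
    funext t
    rw [hS.shiftInv j k l (Function.update x i t), update_tau]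
  show deriv _ (x i) = deriv _ ((tau k l x) (i + k))
  rw [e]
  have : tau k l x (i + k) = x i + (l:ℝ) := by
    show x (i + k - k) + (l:ℝ) = x i + l
    rw [show i + k - k = i by ring]
  rw [this, ← deriv_comp_add_const _ (l:ℝ)]

lemma pd_per (hS : SatisfiesAE r C S) {p q : ℤ} {x : ℤ → ℝ} (hx : tau p q x = x)
    (j i m : ℤ) : pd (S (j + m * p)) (i + m * p) x = pd (S j) i x := by
  have h := pd_shift hS j i (m * p) (m * q) x
  rw [per_zsmul hx m] at h
  exact h.symm

lemma pd_antitone_coord (hS : SatisfiesAE r C S) (j i k : ℤ) (hik : i ≠ k) (x : ℤ → ℝ) :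
    Antitone (fun t => pd (S j) i (Function.update x k t)) := by
  apply antitone_of_deriv_nonpos
  · exact fun s => (hasDerivAt_upd (fun z a => hS.diff2 j i a z) x k s).differentiableAt
  · intro s
    rw [(hasDerivAt_upd (fun z a => hS.diff2 j i a z) x k s).deriv]
    exact hS.mono j i k hik _

lemma pd_strictAnti_coord (hS : SatisfiesAE r C S) (j k : ℤ) (hjk : |j - k| = 1) (x : ℤ → ℝ) :
    StrictAnti (fun t => pd (S j) j (Function.update x k t)) := by
  apply strictAnti_of_deriv_neg
  intro s
  rw [(hasDerivAt_upd (fun z a => hS.diff2 j j a z) x k s).deriv]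
  exact hS.monoStrict j k hjk _

lemma ite_insert (f g : ℤ → ℝ) (B : Finset ℤ) (a : ℤ) :
    (fun k => if k ∈ insert a B then f k else g k)
      = Function.update (fun k => if k ∈ B then f k else g k) a (f a) := by
  funext m
  rcases eq_or_ne m a with rfl | hm
  · simp
  · rw [Function.update_of_ne hm]
    simp only [Finset.mem_insert]
    rcases Classical.em (m ∈ B) with h | h
    · rw [if_pos (Or.inr h), if_pos h]
    · rw [if_neg (by tauto), if_neg h]

lemma pd_anti (hS : SatisfiesAE r C S) (j i : ℤ) {x y : ℤ → ℝ} (hxy : x ≤ y)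
    (hi : x i = y i) : pd (S j) i y ≤ pd (S j) i x := by
  classical
  set mix : Finset ℤ → (ℤ → ℝ) := fun B k => if k ∈ B then y k else x k with hmix
  have claim : ∀ B : Finset ℤ, pd (S j) i (mix B) ≤ pd (S j) i x := by
    intro B
    induction B using Finset.induction_on with
    | empty =>
        have : mix ∅ = x := by funext k; simp [hmix]
        rw [this]
    | insert a B ha ih =>
        have hup : mix (insert a B) = Function.update (mix B) a (y a) := ite_insert y x B a
        have hBa : mix B a = x a := by simp [hmix, ha]
        rcases eq_or_ne a i with rfl | hai
        · rw [hup, ← hi, ← hBa, Function.update_eq_self]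
          exact ih
        · rw [hup]
          calc pd (S j) i (Function.update (mix B) a (y a))
              ≤ pd (S j) i (Function.update (mix B) a (mix B a)) := by
                apply pd_antitone_coord hS j i a (Ne.symm hai)
                rw [hBa]; exact hxy a
            _ = pd (S j) i (mix B) := by rw [Function.update_eq_self]
            _ ≤ pd (S j) i x := ih
  have hfin : pd (S j) i y = pd (S j) i (mix (Finset.Icc (j - r) (j + r))) := by
    apply pd_congr_local hS
    · intro m hm _
      have : m ∈ Finset.Icc (j - (r:ℤ)) (j + r) := by
        rw [Finset.mem_Icc]; rw [abs_le] at hm; omega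
      simp [hmix, this]
    · simp only [hmix]
      split <;> [rfl; exact hi.symm]
  rw [hfin]
  exact claim _

lemma increment_compare (hS : SatisfiesAE r C S) (j i : ℤ) {z w : ℤ → ℝ} (hzw : z ≤ w)
    {a b : ℝ} (hab : a ≤ b) :
    S j (Function.update w i b) - S j (Function.update w i a)
      ≤ S j (Function.update z i b) - S j (Function.update z i a) := by
  have d1 : ∀ (v : ℤ → ℝ) (c : ℤ), DifferentiableAt ℝ (fun t => S j (Function.update v c t)) (v c) :=
    fun v c => hS.diff1 j c v
  set φ : ℝ → ℝ := fun t => S j (Function.update z i t) - S j (Function.update w i t) with hφ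
  have φd : ∀ t, HasDerivAt φ
      (pd (S j) i (Function.update z i t) - pd (S j) i (Function.update w i t)) t :=
    fun t => (hasDerivAt_upd d1 z i t).sub (hasDerivAt_upd d1 w i t)
  have hmono : Monotone φ := by
    apply monotone_of_deriv_nonneg (fun t => (φd t).differentiableAt)
    intro t
    rw [(φd t).deriv]
    have h1 : Function.update z i t ≤ Function.update w i t := update_le_update hzw i t
    have h2 : Function.update z i t i = Function.update w i t i := by simp
    linarith [pd_anti hS j i h1 h2]
  have := hmono hab
  simp only [hφ] at this
  linarith

lemma S_submod (hS : SatisfiesAE r C S) (j : ℤ) (x y : ℤ → ℝ) :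
    S j (x ⊓ y) + S j (x ⊔ y) ≤ S j x + S j y := by
  classical
  set u : Finset ℤ → (ℤ → ℝ) := fun B k => if k ∈ B then (x ⊔ y) k else y k with hu
  set v : Finset ℤ → (ℤ → ℝ) := fun B k => if k ∈ B then x k else (x ⊓ y) k with hv
  have claim : ∀ B : Finset ℤ, S j (u B) - S j y ≤ S j (v B) - S j (x ⊓ y) := by
    intro B
    induction B using Finset.induction_on with
    | empty =>
        have h1 : u ∅ = y := by funext k; simp [hu]
        have h2 : v ∅ = x ⊓ y := by funext k; simp [hv]
        rw [h1, h2]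
        simp
    | insert a B ha ih =>
        have hu2 : u (insert a B) = Function.update (u B) a ((x ⊔ y) a) := ite_insert _ _ B a
        have hv2 : v (insert a B) = Function.update (v B) a (x a) := ite_insert _ _ B a
        have hua : u B a = y a := by simp [hu, ha]
        have hva : v B a = (x ⊓ y) a := by simp [hv, ha]
        have hvu : v B ≤ u B := by
          intro k
          simp only [hu, hv]
          split
          · exact le_sup_left
          · exact inf_le_right
        rcases le_or_gt (y a) (x a) with hcase | hcase
        · have hsup : (x ⊔ y) a = x a := by
            show x a ⊔ y a = x a
            exact sup_eq_left.mpr hcase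
          have hinf : (x ⊓ y) a = y a := by
            show x a ⊓ y a = y a
            exact inf_eq_right.mpr hcase
          have key := increment_compare hS j a hvu hcase
          rw [hu2, hv2, hsup]
          have e1 : Function.update (u B) a (y a) = u B := by
            rw [← hua, Function.update_eq_self]
          have e2 : Function.update (v B) a (y a) = v B := by
            rw [← hinf, ← hva, Function.update_eq_self]
          rw [e1, e2] at key
          linarith
        · have hsup : (x ⊔ y) a = y a := by
            show x a ⊔ y a = y a
            exact sup_eq_right.mpr hcase.le
          have hinf : (x ⊓ y) a = x a := by
            show x a ⊓ y a = x a
            exact inf_eq_left.mpr hcase.le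
          rw [hu2, hv2, hsup, ← hua, Function.update_eq_self,
            show x a = v B a by rw [hva, hinf], Function.update_eq_self]
          exact ih
  have hfin := claim (Finset.Icc (j - r) (j + r))
  have e1 : S j (u (Finset.Icc (j - r) (j + r))) = S j (x ⊔ y) := by
    apply hS.finRange
    intro m hm
    have : m ∈ Finset.Icc (j - (r:ℤ)) (j + r) := by
      rw [Finset.mem_Icc]; rw [abs_le] at hm; omega
    simp [hu, this]
  have e2 : S j (v (Finset.Icc (j - r) (j + r))) = S j x := by
    apply hS.finRange
    intro m hm
    have : m ∈ Finset.Icc (j - (r:ℤ)) (j + r) := by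
      rw [Finset.mem_Icc]; rw [abs_le] at hm; omega
    simp [hv, this]
  rw [e1, e2] at hfin
  linarith

lemma Wper_submod (hS : SatisfiesAE r C S) (p : ℕ) (x y : ℤ → ℝ) :
    Wper S p (x ⊓ y) + Wper S p (x ⊔ y) ≤ Wper S p x + Wper S p y := by
  unfold Wper
  rw [← Finset.sum_add_distrib, ← Finset.sum_add_distrib]
  exact Finset.sum_le_sum fun j _ => S_submod hS j x y

end AM2

section AM3

variable {r : ℕ} {C : ℝ} {S : ℤ → (ℤ → ℝ) → ℝ}

lemma abs_sub_le' (a b : ℝ) : |a - b| ≤ |a| + |b| := by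
  rw [sub_eq_add_neg]
  exact (abs_add_le _ _).trans (by rw [abs_neg])

lemma S_lipschitz_coord (hS : SatisfiesAE r C S) (j i : ℤ) (x : ℤ → ℝ) (a b : ℝ) :
    |S j (Function.update x i b) - S j (Function.update x i a)| ≤ C * |b - a| := by
  have key := Convex.norm_image_sub_le_of_norm_deriv_le (𝕜 := ℝ)
    (f := fun t => S j (Function.update x i t)) (s := Set.univ)
    (fun t _ => (hasDerivAt_upd (fun z c => hS.diff1 j c z) x i t).differentiableAt)
    (fun t _ => by
      rw [(hasDerivAt_upd (fun z c => hS.diff1 j c z) x i t).deriv, Real.norm_eq_abs]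
      exact hS.bdd1 j i _)
    convex_univ (Set.mem_univ a) (Set.mem_univ b)
  simpa [Real.norm_eq_abs] using key

lemma S_lipschitz (hS : SatisfiesAE r C S) (j : ℤ) {z z' : ℤ → ℝ} (A : Finset ℤ)
    (hA : ∀ k, k ∉ A → z k = z' k) :
    |S j z - S j z'| ≤ C * ∑ k ∈ A, |z k - z' k| := by
  classical
  set mix : Finset ℤ → (ℤ → ℝ) := fun B k => if k ∈ B then z k else z' k with hmix
  have claim : ∀ B : Finset ℤ, |S j (mix B) - S j z'| ≤ C * ∑ k ∈ B, |z k - z' k| := by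
    intro B
    induction B using Finset.induction_on with
    | empty =>
        have h1 : mix ∅ = z' := by funext k; simp [hmix]
        rw [h1]; simp
    | insert a B ha ih =>
        have hup : mix (insert a B) = Function.update (mix B) a (z a) := ite_insert _ _ B a
        have hBa : mix B a = z' a := by simp [hmix, ha]
        have step : |S j (mix (insert a B)) - S j (mix B)| ≤ C * |z a - z' a| := by
          have h := S_lipschitz_coord hS j a (mix B) (z' a) (z a)
          rw [show Function.update (mix B) a (z' a) = mix B by
            rw [← hBa, Function.update_eq_self]] at h
          rw [hup]
          exact h
        rw [Finset.sum_insert ha]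
        calc |S j (mix (insert a B)) - S j z'|
            ≤ |S j (mix (insert a B)) - S j (mix B)| + |S j (mix B) - S j z'| :=
              abs_sub_le _ _ _
          _ ≤ C * |z a - z' a| + C * ∑ k ∈ B, |z k - z' k| := add_le_add step ih
          _ = C * (|z a - z' a| + ∑ k ∈ B, |z k - z' k|) := by ring
  have hAz : mix A = z := by
    funext k
    simp only [hmix]
    split
    · rfl
    · next h => exact (hA k h).symm
  have h := claim A
  rw [hAz] at h
  exact h

lemma S_lower (hS : SatisfiesAE r C S) : ∃ B : ℝ, 0 ≤ B ∧ ∀ (j : ℤ) (x : ℤ → ℝ), -B ≤ S j x := by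
  obtain ⟨R₀, hR₀⟩ := hS.coercive 0 1 (by norm_num) 0
  set R' : ℝ := max R₀ 0 with hR'
  have hR'0 : 0 ≤ R' := le_max_right _ _
  refine ⟨2 * C * R', by nlinarith [hS.C_pos, hR'0], ?_⟩
  have h0 : ∀ x : ℤ → ℝ, -(2 * C * R') ≤ S 0 x := by
    intro x
    rcases le_or_gt R₀ (|x 1 - x 0|) with h | h
    · have hpos := hR₀ x h
      nlinarith [hS.C_pos]
    · set x' : ℤ → ℝ := Function.update x 1 (x 0 + R') with hx'
      have hx'1 : x' 1 = x 0 + R' := by simp [hx']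
      have hx'0 : x' 0 = x 0 := by rw [hx', Function.update_of_ne (by norm_num)]
      have hS0 : (0:ℝ) ≤ S 0 x' := by
        apply hR₀
        rw [hx'1, hx'0, show x 0 + R' - x 0 = R' by ring, abs_of_nonneg hR'0]
        exact le_max_left _ _
      have hd : |x 1 - (x 0 + R')| ≤ 2 * R' := by
        have h1 : |x 1 - x 0| ≤ R' := le_trans h.le (le_max_left _ _)
        calc |x 1 - (x 0 + R')| = |(x 1 - x 0) - R'| := by ring_nf
          _ ≤ |x 1 - x 0| + |R'| := abs_sub_le' _ _
          _ ≤ R' + R' := add_le_add h1 (by rw [abs_of_nonneg hR'0])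
          _ = 2 * R' := by ring
      have hlip : |S 0 x - S 0 x'| ≤ C * (2 * R') := by
        have h2 := S_lipschitz_coord hS 0 1 x (x 0 + R') (x 1)
        rw [Function.update_eq_self] at h2
        rw [hx']
        calc |S 0 x - S 0 (Function.update x 1 (x 0 + R'))|
            ≤ C * |x 1 - (x 0 + R')| := h2
          _ ≤ C * (2 * R') := mul_le_mul_of_nonneg_left hd hS.C_pos.le
      have habs := (abs_le.mp hlip).1
      linarith [hS0]
  intro j x
  have hjx : S j x = S 0 (tau (-j) 0 x) := by
    have h := S_tau hS j j 0 (tau (-j) 0 x)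
    rw [tau_tau] at h
    rw [tau_congr x (by ring : j + -j = 0) (by ring : (0:ℤ) + 0 = 0), tau_zero] at h
    simp only [sub_self] at h
    exact h
  rw [hjx]
  exact h0 _

/-- Existence of periodic minimizers. -/
lemma exists_perMin (hS : SatisfiesAE r C S) (p : ℕ) (hp : 1 ≤ p) (q : ℤ) :
    ∃ x : ℤ → ℝ, PerMin S p q x := by
  classical
  obtain ⟨B, hB0, hB⟩ := S_lower hS
  have hp' : (0:ℤ) < (p:ℤ) := by exact_mod_cast hp
  have hpR : (0:ℝ) < (p:ℝ) := by exact_mod_cast hp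
  set xlin : ℤ → ℝ := fun i => ((i:ℝ) - 1) * ((q:ℝ) / (p:ℝ)) with hxlin
  have hlinper : tau (p:ℤ) q xlin = xlin := by
    funext i
    show (((i - (p:ℤ) : ℤ):ℝ) - 1) * ((q:ℝ)/(p:ℝ)) + (q:ℝ) = ((i:ℝ) - 1) * ((q:ℝ)/(p:ℝ))
    push_cast
    field_simp
    ring
  set M₁ : ℝ := Wper S p xlin + (p:ℝ) * B with hM₁
  set Rj : ℤ → ℝ := fun j => Classical.choose (hS.coercive j (j+1) (by simp) M₁) with hRjdef
  have hRjspec : ∀ j : ℤ, ∀ x : ℤ → ℝ, Rj j ≤ |x (j+1) - x j| → M₁ ≤ S j x :=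
    fun j => Classical.choose_spec (hS.coercive j (j+1) (by simp) M₁)
  have hne : (Finset.Icc (1:ℤ) (p:ℤ)).Nonempty := ⟨1, by rw [Finset.mem_Icc]; omega⟩
  set R : ℝ := max (|(q:ℝ)| + 1) ((Finset.Icc (1:ℤ) (p:ℤ)).sup' hne Rj) with hRdef
  have hR1 : (1:ℝ) ≤ R :=
    le_trans (by linarith [abs_nonneg ((q:ℝ))] : (1:ℝ) ≤ |(q:ℝ)| + 1) (le_max_left _ _)
  have hR0 : (0:ℝ) ≤ R := by linarith
  set K : Set (ℤ → ℝ) := {x | tau (p:ℤ) q x = x ∧ x 1 ∈ Set.Icc (0:ℝ) 1 ∧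
    ∀ i : ℤ, |x (i+1) - x i| ≤ R} with hK
  have hlind : ∀ i : ℤ, |xlin (i+1) - xlin i| ≤ R := by
    intro i
    have e : xlin (i+1) - xlin i = (q:ℝ)/(p:ℝ) := by
      show (((i+1:ℤ):ℝ) - 1) * ((q:ℝ)/(p:ℝ)) - ((i:ℝ) - 1) * ((q:ℝ)/(p:ℝ)) = (q:ℝ)/(p:ℝ)
      push_cast
      ring
    rw [e, abs_div, abs_of_pos hpR]
    calc |(q:ℝ)| / (p:ℝ) ≤ |(q:ℝ)| := div_le_self (abs_nonneg _) (by exact_mod_cast hp)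
      _ ≤ R := le_trans (by linarith) (le_max_left _ _)
  have hlin1 : xlin 1 = 0 := by
    show (((1:ℤ):ℝ) - 1) * ((q:ℝ)/(p:ℝ)) = 0
    norm_num
  have hlinK : xlin ∈ K := by
    refine ⟨hlinper, ?_, hlind⟩
    rw [hlin1]
    constructor <;> norm_num
  have hgrow : ∀ x ∈ K, ∀ i : ℤ, |x i - x 1| ≤ R * ((i - 1).natAbs : ℝ) := by
    intro x hx i
    obtain ⟨-, -, hd⟩ := hx
    have up : ∀ n : ℕ, |x (1 + (n:ℤ)) - x 1| ≤ R * (n:ℝ) := by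
      intro n
      induction n with
      | zero => simp
      | succ m ih =>
          have h1 : |x (1 + (m:ℤ) + 1) - x (1 + (m:ℤ))| ≤ R := hd (1 + m)
          have e : (1:ℤ) + ((m+1 : ℕ):ℤ) = 1 + (m:ℤ) + 1 := by push_cast; ring
          rw [e]
          calc |x (1 + (m:ℤ) + 1) - x 1|
              ≤ |x (1+(m:ℤ)+1) - x (1+(m:ℤ))| + |x (1+(m:ℤ)) - x 1| := abs_sub_le _ _ _
            _ ≤ R + R * (m:ℝ) := add_le_add h1 ih
            _ = R * ((m+1 : ℕ):ℝ) := by push_cast; ring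
    have down : ∀ n : ℕ, |x (1 - (n:ℤ)) - x 1| ≤ R * (n:ℝ) := by
      intro n
      induction n with
      | zero => simp
      | succ m ih =>
          have h1 : |x (1 - (m:ℤ) - 1 + 1) - x (1 - (m:ℤ) - 1)| ≤ R := hd (1 - (m:ℤ) - 1)
          rw [show (1:ℤ) - (m:ℤ) - 1 + 1 = 1 - (m:ℤ) by ring] at h1
          have e : (1:ℤ) - ((m+1:ℕ):ℤ) = 1 - (m:ℤ) - 1 := by push_cast; ring
          rw [e]
          calc |x (1 - (m:ℤ) - 1) - x 1|
              ≤ |x (1-(m:ℤ)-1) - x (1-(m:ℤ))| + |x (1-(m:ℤ)) - x 1| := abs_sub_le _ _ _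
            _ ≤ R + R * (m:ℝ) := add_le_add (by rw [abs_sub_comm]; exact h1) ih
            _ = R * ((m+1:ℕ):ℝ) := by push_cast; ring
    rcases le_or_gt 1 i with h | h
    · obtain ⟨n, rfl⟩ : ∃ n : ℕ, i = 1 + (n:ℤ) := ⟨(i-1).toNat, by omega⟩
      rw [show ((1 + (n:ℤ) - 1).natAbs : ℝ) = (n:ℝ) by
        rw [show (1:ℤ) + (n:ℤ) - 1 = (n:ℤ) by ring]; simp]
      exact up n
    · obtain ⟨n, rfl⟩ : ∃ n : ℕ, i = 1 - (n:ℤ) := ⟨(1-i).toNat, by omega⟩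
      rw [show ((1 - (n:ℤ) - 1).natAbs : ℝ) = (n:ℝ) by
        rw [show (1:ℤ) - (n:ℤ) - 1 = -(n:ℤ) by ring]; simp]
      exact down n
  set bnd : ℤ → ℝ := fun i => 1 + R * ((i - 1).natAbs : ℝ) with hbnd
  have hsub : K ⊆ Set.pi Set.univ (fun i => Set.Icc (-(bnd i)) (bnd i)) := by
    intro x hx i _
    have h1 := hgrow x hx i
    obtain ⟨-, h2, -⟩ := hx
    rw [Set.mem_Icc] at h2
    have habs : |x i| ≤ bnd i := by
      calc |x i| = |(x i - x 1) + x 1| := by ring_nf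
        _ ≤ |x i - x 1| + |x 1| := abs_add_le _ _
        _ ≤ R * ((i - 1).natAbs : ℝ) + 1 := add_le_add h1 (abs_le.mpr ⟨by linarith [h2.1], h2.2⟩)
        _ = bnd i := by rw [hbnd]; ring
    rw [Set.mem_Icc]
    exact abs_le.mp habs
  have hclosed : IsClosed K := by
    have e : K = {x : ℤ → ℝ | ∀ i : ℤ, x (i - (p:ℤ)) + (q:ℝ) = x i} ∩
        (((fun x : ℤ → ℝ => x 1) ⁻¹' Set.Icc (0:ℝ) 1) ∩
        {x : ℤ → ℝ | ∀ i : ℤ, |x (i+1) - x i| ≤ R}) := by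
      ext x
      simp only [hK, Set.mem_setOf_eq, Set.mem_inter_iff, Set.mem_preimage]
      constructor
      · rintro ⟨h1, h2, h3⟩
        exact ⟨fun i => congrFun h1 i, h2, h3⟩
      · rintro ⟨h1, h2, h3⟩
        exact ⟨funext h1, h2, h3⟩
    rw [e]
    refine IsClosed.inter ?_ (IsClosed.inter ?_ ?_)
    · have e2 : {x : ℤ → ℝ | ∀ i : ℤ, x (i - (p:ℤ)) + (q:ℝ) = x i}
          = ⋂ i : ℤ, {x : ℤ → ℝ | x (i - (p:ℤ)) + (q:ℝ) = x i} := by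
        ext x; simp [Set.mem_iInter]
      rw [e2]
      exact isClosed_iInter fun i =>
        isClosed_eq ((continuous_apply (i - (p:ℤ))).add continuous_const) (continuous_apply i)
    · exact isClosed_Icc.preimage (continuous_apply 1)
    · have e3 : {x : ℤ → ℝ | ∀ i : ℤ, |x (i+1) - x i| ≤ R}
          = ⋂ i : ℤ, {x : ℤ → ℝ | |x (i+1) - x i| ≤ R} := by
        ext x; simp [Set.mem_iInter]
      rw [e3]
      exact isClosed_iInter fun i =>
        isClosed_le ((continuous_apply (i+1)).sub (continuous_apply i)).abs continuous_const
  have hcomp : IsCompact K :=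
    IsCompact.of_isClosed_subset (isCompact_univ_pi fun i => isCompact_Icc) hclosed hsub
  obtain ⟨xm, hxmK, hxmmin⟩ := hcomp.exists_isMinOn ⟨xlin, hlinK⟩
    (Wper_continuous hS p).continuousOn
  have hmin : ∀ y ∈ K, Wper S p xm ≤ Wper S p y := fun y hy => isMinOn_iff.mp hxmmin y hy
  refine ⟨xm, hxmK.1, fun y hy => ?_⟩
  set m : ℤ := ⌊y 1⌋ with hm
  set y' : ℤ → ℝ := tau 0 (-m) y with hy'def
  have hy'per : tau (p:ℤ) q y' = y' := PerMin.tau_per hy 0 (-m)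
  have hW' : Wper S p y' = Wper S p y := Wper_tau hS hp hy 0 (-m)
  have hy'app : ∀ i, y' i = y i - (m:ℝ) := fun i => by
    show y (i - 0) + ((-m:ℤ):ℝ) = y i - (m:ℝ)
    rw [sub_zero]; push_cast; ring
  have hy'1 : y' 1 ∈ Set.Icc (0:ℝ) 1 := by
    rw [Set.mem_Icc, hy'app]
    constructor
    · linarith [Int.floor_le (y 1)]
    · linarith [Int.lt_floor_add_one (y 1)]
  by_cases hc : ∀ i : ℤ, |y' (i+1) - y' i| ≤ R
  · have hyK : y' ∈ K := ⟨hy'per, hy'1, hc⟩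
    rw [← hW']
    exact hmin y' hyK
  · push_neg at hc
    obtain ⟨i, hi⟩ := hc
    set d : ℤ := (i - 1) / (p:ℤ) with hd
    set j : ℤ := 1 + (i - 1) % (p:ℤ) with hj
    have hemod1 := Int.emod_nonneg (i - 1) (ne_of_gt hp')
    have hemod2 := Int.emod_lt_of_pos (i - 1) hp'
    have hjmem : j ∈ Finset.Icc (1:ℤ) (p:ℤ) := by
      rw [Finset.mem_Icc, hj]
      constructor <;> linarith
    have hiji : i = j + d * (p:ℤ) := by
      have h := Int.emod_add_mul_ediv (i - 1) (p:ℤ)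
      rw [hj, hd]
      linarith
    have hd1 : y' (i + 1) - y' i = y' (j+1) - y' j := by
      have e1 : y' (j + 1 + d * (p:ℤ)) = y' (j+1) + ((d * q : ℤ):ℝ) := per_apply hy'per (j+1) d
      have e2 : y' (j + d * (p:ℤ)) = y' j + ((d * q : ℤ):ℝ) := per_apply hy'per j d
      have eA : i + 1 = j + 1 + d * (p:ℤ) := by rw [hiji]; ring
      rw [eA, hiji, e1, e2]
      ring
    have hSj : M₁ ≤ S j y' := by
      apply hRjspec j
      rw [show y' (j+1) - y' j = y' (i+1) - y' i from hd1.symm]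
      have hle : Rj j ≤ R := le_trans (Finset.le_sup' Rj hjmem) (le_max_right _ _)
      linarith [hi]
    have hsum : Wper S p xlin ≤ Wper S p y' := by
      have hcard : ((Finset.Icc (1:ℤ) (p:ℤ)).erase j).card = p - 1 := by
        rw [Finset.card_erase_of_mem hjmem, Int.card_Icc]
        omega
      have h2 := Finset.card_nsmul_le_sum ((Finset.Icc (1:ℤ) (p:ℤ)).erase j)
        (fun k => S k y') (-B) (fun k _ => hB k y')
      rw [hcard, nsmul_eq_mul] at h2
      have hcast : ((p - 1 : ℕ) : ℝ) = (p:ℝ) - 1 := by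
        rw [Nat.cast_sub hp]; norm_num
      rw [hcast] at h2
      have h3 : Wper S p y' = S j y' + ∑ k ∈ (Finset.Icc (1:ℤ) (p:ℤ)).erase j, S k y' :=
        (Finset.add_sum_erase _ _ hjmem).symm
      rw [h3]
      rw [hM₁] at hSj
      nlinarith [hSj, h2, hB0]
    rw [← hW']
    exact le_trans (hmin xlin hlinK) hsum

end AM3

section AM4

variable {r : ℕ} {C : ℝ} {S : ℤ → (ℤ → ℝ) → ℝ}

lemma mvt_helper (g g' : ℝ → ℝ) (hg : ∀ s, HasDerivAt g (g' s) s) (a b : ℝ) (hab : a ≠ b) :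
    ∃ c, |c - a| ≤ |b - a| ∧ g b - g a = (b - a) * g' c := by
  have hdiffg : Differentiable ℝ g := fun s => (hg s).differentiableAt
  have hcont : Continuous g := hdiffg.continuous
  rcases lt_or_gt_of_ne hab with h | h
  · obtain ⟨c, hc, hceq⟩ := exists_hasDerivAt_eq_slope g g' h hcont.continuousOn
      (fun s _ => hg s)
    rw [Set.mem_Ioo] at hc
    refine ⟨c, ?_, ?_⟩
    · rw [abs_of_pos (by linarith), abs_of_pos (by linarith)]; linarith
    · have hba : b - a ≠ 0 := sub_ne_zero.mpr (Ne.symm hab)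
      rw [hceq]; field_simp
  · obtain ⟨c, hc, hceq⟩ := exists_hasDerivAt_eq_slope g g' h hcont.continuousOn
      (fun s _ => hg s)
    rw [Set.mem_Ioo] at hc
    refine ⟨c, ?_, ?_⟩
    · rw [abs_of_neg (by linarith), abs_of_neg (by linarith)]; linarith
    · have hba : a - b ≠ 0 := sub_ne_zero.mpr hab
      rw [hceq]; field_simp; ring

lemma hasDerivAt_dir {F : (ℤ → ℝ) → ℝ}
    (hdiff : ∀ (z : ℤ → ℝ) (a : ℤ), DifferentiableAt ℝ (fun t => F (Function.update z a t)) (z a))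
    (hcont : ∀ a : ℤ, Continuous (pd F a))
    (x : ℤ → ℝ) (A : Finset ℤ) (χ : ℤ → ℝ) (hχ : ∀ k, k ∉ A → χ k = 0) :
    HasDerivAt (fun t => F (fun k => x k + t * χ k)) (∑ k ∈ A, χ k * pd F k x) 0 := by
  classical
  induction A using Finset.induction_on generalizing χ with
  | empty =>
      have e : (fun t => F (fun k => x k + t * χ k)) = fun _ => F x := by
        funext t; congr 1; funext k; rw [hχ k (Finset.notMem_empty k)]; ring
      rw [e, Finset.sum_empty]
      exact hasDerivAt_const 0 (F x)
  | @insert a B ha ih =>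
      set χ' : ℤ → ℝ := Function.update χ a 0 with hχ'
      have hχ'a : χ' a = 0 := by simp [hχ']
      have hχ'B : ∀ k, k ∉ B → χ' k = 0 := by
        intro k hk
        rcases eq_or_ne k a with rfl | hka
        · simp [hχ']
        · rw [hχ', Function.update_of_ne hka]
          exact hχ k (by simp [Finset.mem_insert, hka, hk])
      have hupdate : ∀ t : ℝ, (fun k => x k + t * χ k)
          = Function.update (fun k => x k + t * χ' k) a (x a + t * χ a) := by
        intro t; funext k
        rcases eq_or_ne k a with rfl | hka
        · rw [Function.update_self]
        · rw [Function.update_of_ne hka, hχ', Function.update_of_ne hka]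
      have hψ : HasDerivAt (fun t => F (fun k => x k + t * χ k) - F (fun k => x k + t * χ' k))
          (χ a * pd F a x) 0 := by
        rcases eq_or_ne (χ a) 0 with hza | hza
        · have e : (fun t => F (fun k => x k + t * χ k) - F (fun k => x k + t * χ' k))
              = fun _ => 0 := by
            funext t
            rw [hupdate t, hza]
            rw [show x a + t * 0 = (fun k => x k + t * χ' k) a from by
              show x a + t * 0 = x a + t * χ' a
              rw [hχ'a]]
            rw [Function.update_eq_self, sub_self]
          rw [e, hza, zero_mul]
          exact hasDerivAt_const 0 0
        · rw [hasDerivAt_iff_tendsto_slope, Metric.tendsto_nhdsWithin_nhds]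
          intro ε hε
          have hG : Continuous (fun ts : ℝ × ℝ =>
              pd F a (Function.update (fun k => x k + ts.1 * χ' k) a ts.2)) := by
            apply (hcont a).comp
            apply continuous_pi
            intro k
            rcases eq_or_ne k a with rfl | hka
            · simp only [Function.update_self]
              exact continuous_snd
            · simp only [Function.update_of_ne hka]
              exact continuous_const.add (continuous_fst.mul continuous_const)
          have hGat : ContinuousAt (fun ts : ℝ × ℝ =>
              pd F a (Function.update (fun k => x k + ts.1 * χ' k) a ts.2)) ((0:ℝ), x a) :=
            hG.continuousAt
          obtain ⟨δ, hδ0, hδ⟩ := Metric.continuousAt_iff.mp hGat (ε / |χ a|)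
            (by positivity)
          have hG0 : pd F a (Function.update (fun k => x k + (0:ℝ) * χ' k) a (x a)) = pd F a x := by
            congr 1
            funext k
            rcases eq_or_ne k a with rfl | hka
            · rw [Function.update_self]
            · rw [Function.update_of_ne hka]; ring
          refine ⟨δ / (1 + |χ a|), by positivity, ?_⟩
          intro t ht htd
          have ht0 : t ≠ 0 := ht
          rw [Real.dist_eq, sub_zero] at htd
          set base : ℤ → ℝ := fun k => x k + t * χ' k with hbase
          have hbasea : base a = x a := by rw [hbase]; simp only [hχ'a]; ring
          obtain ⟨c, hc1, hc2⟩ := mvt_helper (fun s => F (Function.update base a s))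
            (fun s => pd F a (Function.update base a s))
            (fun s => hasDerivAt_upd hdiff base a s) (x a) (x a + t * χ a)
            (by
              intro hEq
              have : t * χ a = 0 := by linarith
              exact (mul_ne_zero ht0 hza) this)
          have hft : F (fun k => x k + t * χ k) - F base
              = (t * χ a) * pd F a (Function.update base a c) := by
            have e1 : Function.update base a (x a) = base := by
              rw [← hbasea, Function.update_eq_self]
            have h3 := hc2
            rw [e1, show x a + t * χ a - x a = t * χ a by ring] at h3
            have e4 : F (fun k => x k + t * χ k) = F (Function.update base a (x a + t * χ a)) :=
              congrArg F (hupdate t)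
            linarith [h3, e4]
          have hf0 : F (fun k => x k + (0:ℝ) * χ k) - F (fun k => x k + (0:ℝ) * χ' k) = 0 := by
            have e1 : (fun k => x k + (0:ℝ) * χ k) = x := by funext k; ring
            have e2 : (fun k => x k + (0:ℝ) * χ' k) = x := by funext k; ring
            rw [e1, e2, sub_self]
          have hslope : slope (fun t => F (fun k => x k + t * χ k)
              - F (fun k => x k + t * χ' k)) 0 t
              = χ a * pd F a (Function.update base a c) := by
            rw [slope_def_field]
            show ((F (fun k => x k + t * χ k) - F (fun k => x k + t * χ' k))
                - (F (fun k => x k + (0:ℝ) * χ k) - F (fun k => x k + (0:ℝ) * χ' k))) / (t - 0)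
                = χ a * pd F a (Function.update base a c)
            rw [hf0, sub_zero, sub_zero]
            show (F (fun k => x k + t * χ k) - F base) / t = _
            rw [hft]
            field_simp
          rw [hslope]
          have hdist : dist ((t : ℝ), c) (((0:ℝ), x a) : ℝ × ℝ) < δ := by
            rw [Prod.dist_eq]
            apply max_lt
            · rw [Real.dist_eq, sub_zero]
              calc |t| < δ / (1 + |χ a|) := htd
                _ ≤ δ := div_le_self hδ0.le (by linarith [abs_nonneg (χ a)])
            · rw [Real.dist_eq]
              calc |c - x a| ≤ |x a + t * χ a - x a| := hc1
                _ = |t| * |χ a| := by rw [show x a + t * χ a - x a = t * χ a by ring, abs_mul]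
                _ ≤ |t| * (1 + |χ a|) :=
                    mul_le_mul_of_nonneg_left (by linarith [abs_nonneg (χ a)]) (abs_nonneg t)
                _ < (δ / (1 + |χ a|)) * (1 + |χ a|) :=
                    mul_lt_mul_of_pos_right htd (by positivity)
                _ = δ := by field_simp
          have hGc := hδ hdist
          rw [hG0] at hGc
          rw [Real.dist_eq] at hGc ⊢
          have : χ a * pd F a (Function.update base a c) - χ a * pd F a x
              = χ a * (pd F a (Function.update base a c) - pd F a x) := by ring
          rw [this, abs_mul]
          calc |χ a| * |pd F a (Function.update base a c) - pd F a x|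
              < |χ a| * (ε / |χ a|) := by
                apply mul_lt_mul_of_pos_left hGc (abs_pos.mpr hza)
            _ = ε := by field_simp
      have hρ := ih χ' hχ'B
      have hsum := hψ.fun_add hρ
      have e2 : (fun t => (F (fun k => x k + t * χ k) - F (fun k => x k + t * χ' k))
          + F (fun k => x k + t * χ' k)) = fun t => F (fun k => x k + t * χ k) := by
        funext t; ring
      rw [e2] at hsum
      have e3 : χ a * pd F a x + ∑ k ∈ B, χ' k * pd F k x
          = ∑ k ∈ insert a B, χ k * pd F k x := by
        rw [Finset.sum_insert ha]
        congr 1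
        apply Finset.sum_congr rfl
        intro k hk
        rw [hχ', Function.update_of_ne (by rintro rfl; exact ha hk)]
      rw [← e3]
      exact hsum

end AM4

section AM5

variable {r : ℕ} {C : ℝ} {S : ℤ → (ℤ → ℝ) → ℝ}

lemma euler_lagrange (hS : SatisfiesAE r C S) {p : ℕ} (hp : 1 ≤ p) {q : ℤ} {x : ℤ → ℝ}
    (hx : PerMin S p q x) (i : ℤ) :
    ∑ j ∈ Finset.Icc (i - (r:ℤ)) (i + (r:ℤ)), pd (S j) i x = 0 := by
  classical
  have hp' : (0:ℤ) < (p:ℤ) := by exact_mod_cast hp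
  set A : Finset ℤ := (Finset.Icc (1 - (r:ℤ)) ((p:ℤ) + r)).filter
    (fun k => (k - i) % (p:ℤ) = 0) with hA
  set χ : ℤ → ℝ := fun k => if k ∈ A then (1:ℝ) else 0 with hχdef
  have hχ0 : ∀ k, k ∉ A → χ k = 0 := fun k hk => by simp [hχdef, hk]
  set χc : ℤ → ℝ := fun k => if (k - i) % (p:ℤ) = 0 then (1:ℝ) else 0 with hχc
  have hper : ∀ t : ℝ, tau (p:ℤ) q (fun k => x k + t * χc k) = fun k => x k + t * χc k := by
    intro t
    funext k
    show x (k - (p:ℤ)) + t * χc (k - (p:ℤ)) + (q:ℝ) = x k + t * χc k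
    have h1 : x (k - (p:ℤ)) + (q:ℝ) = x k := congrFun hx.1 k
    have h2 : χc (k - (p:ℤ)) = χc k := by
      simp only [hχc]
      have e : (k - (p:ℤ) - i) % (p:ℤ) = (k - i) % (p:ℤ) := by
        rw [show k - (p:ℤ) - i = (k - i) + (p:ℤ) * (-1) by ring, Int.add_mul_emod_self_left]
      rw [e]
    rw [h2]
    linarith [h1]
  have hagree : ∀ t : ℝ,
      Wper S p (fun k => x k + t * χ k) = Wper S p (fun k => x k + t * χc k) := by
    intro t
    unfold Wper
    apply Finset.sum_congr rfl
    intro j hj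
    rw [Finset.mem_Icc] at hj
    apply hS.finRange
    intro m hm
    rw [abs_le] at hm
    have hmem : m ∈ Finset.Icc (1 - (r:ℤ)) ((p:ℤ) + r) := by rw [Finset.mem_Icc]; omega
    have hsame : χ m = χc m := by
      simp only [hχdef, hχc, hA, Finset.mem_filter]
      by_cases hc : (m - i) % (p:ℤ) = 0
      · rw [if_pos ⟨hmem, hc⟩, if_pos hc]
      · rw [if_neg (fun h => hc h.2), if_neg hc]
    rw [hsame]
  have hderiv : HasDerivAt (fun t => Wper S p (fun k => x k + t * χ k))
      (∑ j ∈ Finset.Icc (1:ℤ) (p:ℤ), ∑ k ∈ A, χ k * pd (S j) k x) 0 := by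
    unfold Wper
    apply HasDerivAt.fun_sum
    intro j _
    exact hasDerivAt_dir (fun z a => hS.diff1 j a z) (fun a => hS.cont1 j a) x A χ hχ0
  have hmin : IsLocalMin (fun t => Wper S p (fun k => x k + t * χ k)) 0 := by
    apply Filter.Eventually.of_forall
    intro t
    show Wper S p (fun k => x k + (0:ℝ) * χ k) ≤ Wper S p (fun k => x k + t * χ k)
    have h0 : (fun k => x k + (0:ℝ) * χ k) = x := by funext k; ring
    rw [h0, hagree t]
    exact hx.2 _ (hper t)
  have hzero := hmin.hasDerivAt_eq_zero hderiv
  have hsum1 : ∑ j ∈ Finset.Icc (1:ℤ) (p:ℤ), ∑ k ∈ A, χ k * pd (S j) k x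
      = ∑ jk ∈ (Finset.Icc (1:ℤ) (p:ℤ)) ×ˢ A, pd (S jk.1) jk.2 x := by
    rw [Finset.sum_product]
    apply Finset.sum_congr rfl
    intro j _
    apply Finset.sum_congr rfl
    intro k hk
    rw [hχdef]
    simp only [if_pos hk]
    ring
  set P := ((Finset.Icc (1:ℤ) (p:ℤ)) ×ˢ A).filter (fun jk => |jk.2 - jk.1| ≤ (r:ℤ)) with hP
  have hsplit : ∑ jk ∈ (Finset.Icc (1:ℤ) (p:ℤ)) ×ˢ A, pd (S jk.1) jk.2 x
      = ∑ jk ∈ P, pd (S jk.1) jk.2 x := by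
    rw [← Finset.sum_filter_add_sum_filter_not ((Finset.Icc (1:ℤ) (p:ℤ)) ×ˢ A)
      (fun jk => |jk.2 - jk.1| ≤ (r:ℤ)), hP]
    have hz : ∑ jk ∈ ((Finset.Icc (1:ℤ) (p:ℤ)) ×ˢ A).filter
        (fun jk => ¬ |jk.2 - jk.1| ≤ (r:ℤ)), pd (S jk.1) jk.2 x = 0 := by
      apply Finset.sum_eq_zero
      intro jk hjk
      rw [Finset.mem_filter] at hjk
      exact pd_zero_of_far hS (not_le.mp hjk.2) x
    rw [hz, add_zero]
  have hbij : ∑ jk ∈ P, pd (S jk.1) jk.2 x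
      = ∑ j' ∈ Finset.Icc (i - (r:ℤ)) (i + (r:ℤ)), pd (S j') i x := by
    have memP : ∀ jk : ℤ × ℤ, jk ∈ P ↔
        (1 ≤ jk.1 ∧ jk.1 ≤ (p:ℤ)) ∧ (1 - (r:ℤ) ≤ jk.2 ∧ jk.2 ≤ (p:ℤ) + r)
          ∧ (jk.2 - i) % (p:ℤ) = 0 ∧ |jk.2 - jk.1| ≤ (r:ℤ) := by
      intro jk
      rw [hP, Finset.mem_filter, Finset.mem_product, hA, Finset.mem_filter,
        Finset.mem_Icc, Finset.mem_Icc]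
      tauto
    apply Finset.sum_nbij' (i := fun jk : ℤ × ℤ => jk.1 - jk.2 + i)
      (j := fun j' => (1 + (j' - 1) % (p:ℤ), 1 + (j' - 1) % (p:ℤ) - j' + i))
    · intro jk hjk
      rw [memP] at hjk
      obtain ⟨h1, h2, h3, h4⟩ := hjk
      rw [Finset.mem_Icc]
      rw [abs_le] at h4
      omega
    · intro j' hj'
      rw [Finset.mem_Icc] at hj'
      have e1 := Int.emod_nonneg (j' - 1) (ne_of_gt hp')
      have e2 := Int.emod_lt_of_pos (j' - 1) hp'
      have e3 := Int.emod_add_mul_ediv (j' - 1) (p:ℤ)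
      rw [memP]
      dsimp only
      refine ⟨⟨by linarith, by linarith⟩, ⟨by linarith, by linarith⟩, ?_, ?_⟩
      · have e4 : 1 + (j' - 1) % (p:ℤ) - j' + i - i = (p:ℤ) * (-((j' - 1) / (p:ℤ))) := by
          linarith
        rw [e4, Int.mul_emod_right]
      · have e5 : 1 + (j' - 1) % (p:ℤ) - j' + i - (1 + (j' - 1) % (p:ℤ)) = i - j' := by ring
        rw [e5, abs_le]
        constructor <;> linarith
    · intro jk hjk
      rw [memP] at hjk
      obtain ⟨h1, h2, h3, h4⟩ := hjk
      have hdvd : (p:ℤ) ∣ (jk.2 - i) := Int.dvd_of_emod_eq_zero h3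
      have hmp : ((jk.2 - i) / (p:ℤ)) * (p:ℤ) = jk.2 - i := Int.ediv_mul_cancel hdvd
      have e1 : jk.1 - jk.2 + i - 1 = (jk.1 - 1) + (p:ℤ) * (-((jk.2 - i) / (p:ℤ))) := by
        linarith
      have e2 : (jk.1 - jk.2 + i - 1) % (p:ℤ) = jk.1 - 1 := by
        rw [e1, Int.add_mul_emod_self_left, Int.emod_eq_of_lt (by linarith) (by linarith)]
      have heq : (1 + ((jk.1 - jk.2 + i) - 1) % (p:ℤ), 1 + ((jk.1 - jk.2 + i) - 1) % (p:ℤ)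
          - (jk.1 - jk.2 + i) + i) = (jk.1, jk.2) := by
        rw [e2, Prod.mk.injEq]
        constructor <;> ring
      simpa using heq
    · intro j' _
      dsimp only
      ring
    · intro jk hjk
      rw [memP] at hjk
      obtain ⟨h1, h2, h3, h4⟩ := hjk
      have hdvd : (p:ℤ) ∣ (jk.2 - i) := Int.dvd_of_emod_eq_zero h3
      have hmp : ((jk.2 - i) / (p:ℤ)) * (p:ℤ) = jk.2 - i := Int.ediv_mul_cancel hdvd
      have h := pd_per hS hx.1 (jk.1 - (jk.2 - i)) i ((jk.2 - i) / (p:ℤ))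
      rw [show jk.1 - (jk.2 - i) + (jk.2 - i) / (p:ℤ) * (p:ℤ) = jk.1 by rw [hmp]; ring,
        show i + (jk.2 - i) / (p:ℤ) * (p:ℤ) = jk.2 by rw [hmp]; ring] at h
      rw [h, show jk.1 - (jk.2 - i) = jk.1 - jk.2 + i by ring]
  rw [← hbij, ← hsplit, ← hsum1]
  exact hzero

lemma touching (hS : SatisfiesAE r C S) {p : ℕ} (hp : 1 ≤ p) {q : ℤ} {x y : ℤ → ℝ}
    (hx : PerMin S p q x) (hy : PerMin S p q y) (hxy : x ≤ y) {i₀ : ℤ} (h0 : x i₀ = y i₀) :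
    x = y := by
  have key : ∀ i : ℤ, x i = y i → (x (i+1) = y (i+1) ∧ x (i-1) = y (i-1)) := by
    intro i hi
    by_contra hcon
    obtain ⟨k, hk1, hk2⟩ : ∃ k, |i - k| = 1 ∧ x k < y k := by
      rcases not_and_or.mp hcon with h | h
      · exact ⟨i+1, by simp, lt_of_le_of_ne (hxy (i+1)) h⟩
      · refine ⟨i-1, ?_, lt_of_le_of_ne (hxy (i-1)) h⟩
        rw [show i - (i-1) = 1 by ring]
        norm_num
    have ELx := euler_lagrange hS hp hx i
    have ELy := euler_lagrange hS hp hy i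
    have hterm : ∀ j ∈ Finset.Icc (i - (r:ℤ)) (i + (r:ℤ)), pd (S j) i y ≤ pd (S j) i x :=
      fun j _ => pd_anti hS j i hxy hi
    have hik : i ≠ k := by intro h; rw [h, sub_self] at hk1; norm_num at hk1
    have hstrict : pd (S i) i y < pd (S i) i x := by
      set y' := Function.update y k (x k) with hy'
      have h1 : pd (S i) i y < pd (S i) i y' := by
        have hsa := pd_strictAnti_coord hS i k hk1 y
        have h2 := hsa hk2
        simp only [Function.update_eq_self] at h2
        exact h2
      have h2 : pd (S i) i y' ≤ pd (S i) i x := by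
        apply pd_anti hS i i
        · intro m
          rcases eq_or_ne m k with rfl | hmk
          · rw [hy', Function.update_self]
          · rw [hy', Function.update_of_ne hmk]; exact hxy m
        · rw [hy', Function.update_of_ne hik]; exact hi
      linarith
    have hmem : i ∈ Finset.Icc (i - (r:ℤ)) (i + (r:ℤ)) := by
      rw [Finset.mem_Icc]
      have : (0:ℤ) ≤ r := Int.ofNat_nonneg r
      omega
    have hlt := Finset.sum_lt_sum hterm ⟨i, hmem, hstrict⟩
    rw [ELx, ELy] at hlt
    exact lt_irrefl 0 hlt
  funext i
  have up : ∀ n : ℕ, x (i₀ + (n:ℤ)) = y (i₀ + (n:ℤ)) := by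
    intro n
    induction n with
    | zero => simpa using h0
    | succ m ih =>
        have h := (key _ ih).1
        rw [show i₀ + (m:ℤ) + 1 = i₀ + ((m+1:ℕ):ℤ) by push_cast; ring] at h
        exact h
  have down : ∀ n : ℕ, x (i₀ - (n:ℤ)) = y (i₀ - (n:ℤ)) := by
    intro n
    induction n with
    | zero => simpa using h0
    | succ m ih =>
        have h := (key _ ih).2
        rw [show i₀ - (m:ℤ) - 1 = i₀ - ((m+1:ℕ):ℤ) by push_cast; ring] at h
        exact h
  rcases le_or_gt i₀ i with h | h
  · have hh := up (i - i₀).toNat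
    rw [show i₀ + ((i - i₀).toNat : ℤ) = i by omega] at hh
    exact hh
  · have hh := down (i₀ - i).toNat
    rw [show i₀ - ((i₀ - i).toNat : ℤ) = i by omega] at hh
    exact hh

lemma perMin_strict_order (hS : SatisfiesAE r C S) {p : ℕ} (hp : 1 ≤ p) {q : ℤ}
    {x y : ℤ → ℝ} (hx : PerMin S p q x) (hy : PerMin S p q y) (hne : x ≠ y) :
    (∀ i, x i < y i) ∨ (∀ i, y i < x i) := by
  have hinfper : tau (p:ℤ) q (x ⊓ y) = x ⊓ y := by rw [tau_inf, hx.1, hy.1]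
  have hsupper : tau (p:ℤ) q (x ⊔ y) = x ⊔ y := by rw [tau_sup, hx.1, hy.1]
  have hWxy : Wper S p x = Wper S p y := le_antisymm (hx.2 y hy.1) (hy.2 x hx.1)
  have hWinf : Wper S p x ≤ Wper S p (x ⊓ y) := hx.2 _ hinfper
  have hWsup : Wper S p x ≤ Wper S p (x ⊔ y) := hx.2 _ hsupper
  have hsub := Wper_submod hS p x y
  have hWsup' : Wper S p (x ⊔ y) = Wper S p x := by linarith
  have hsupMin : PerMin S p q (x ⊔ y) :=
    ⟨hsupper, fun z hz => by rw [hWsup']; exact hx.2 z hz⟩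
  by_cases hcase : ∃ i, x i = (x ⊔ y) i
  · obtain ⟨i, hi⟩ := hcase
    have hxsup : x = x ⊔ y := touching hS hp hx hsupMin le_sup_left hi
    have hyx : y ≤ x := sup_eq_left.mp hxsup.symm
    right
    intro i'
    rcases lt_or_eq_of_le (hyx i') with h | h
    · exact h
    · exact absurd (touching hS hp hy hx hyx h) (fun he => hne he.symm)
  · push_neg at hcase
    left
    intro i
    rcases lt_or_ge (x i) (y i) with h | h
    · exact h
    · exact absurd (show x i = (x ⊔ y) i from (sup_eq_left.mpr h).symm ▸ rfl) (hcase i)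

lemma perMin_birkhoff (hS : SatisfiesAE r C S) {p : ℕ} (hp : 1 ≤ p) {q : ℤ} {x : ℤ → ℝ}
    (hx : PerMin S p q x) : Birkhoff x := by
  intro k l k' l'
  have h1 := PerMin.tau hS hp hx k l
  have h2 := PerMin.tau hS hp hx k' l'
  by_cases he : tau k l x = tau k' l' x
  · left; rw [he]
  · rcases perMin_strict_order hS hp h1 h2 he with h | h
    · left; exact fun i => (h i).le
    · right; exact fun i => (h i).le

end AM5

section AM6

variable {r : ℕ} {C : ℝ} {S : ℤ → (ℤ → ℝ) → ℝ}

lemma perMin_closed (hS : SatisfiesAE r C S) (p : ℕ) (q : ℤ) (x : ℕ → ℤ → ℝ)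
    (hx : ∀ n, PerMin S p q (x n)) (xinf : ℤ → ℝ)
    (hlim : ∀ i : ℤ, Filter.Tendsto (fun n => x n i) Filter.atTop (nhds (xinf i))) :
    PerMin S p q xinf := by
  have hper : tau (p:ℤ) q xinf = xinf := by
    funext i
    show xinf (i - (p:ℤ)) + (q:ℝ) = xinf i
    have h1 : Filter.Tendsto (fun n => x n (i - (p:ℤ)) + (q:ℝ)) Filter.atTop
        (nhds (xinf (i - (p:ℤ)) + (q:ℝ))) := (hlim (i - (p:ℤ))).add tendsto_const_nhds
    have h2 : ∀ n, x n (i - (p:ℤ)) + (q:ℝ) = x n i := fun n => congrFun (hx n).1 i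
    have h1' : Filter.Tendsto (fun n => x n i) Filter.atTop
        (nhds (xinf (i - (p:ℤ)) + (q:ℝ))) := h1.congr h2
    exact tendsto_nhds_unique h1' (hlim i)
  refine ⟨hper, fun y hy => ?_⟩
  have hconv : Filter.Tendsto (fun n => x n) Filter.atTop (nhds xinf) :=
    tendsto_pi_nhds.mpr hlim
  have hW : Filter.Tendsto (fun n => Wper S p (x n)) Filter.atTop (nhds (Wper S p xinf)) :=
    ((Wper_continuous hS p).tendsto xinf).comp hconv
  exact le_of_tendsto hW (Filter.Eventually.of_forall fun n => (hx n).2 y hy)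

lemma per_iterate {g : ℤ → ℝ} {T : ℤ} (hg : ∀ j, g (j + T) = g j) :
    ∀ m : ℤ, ∀ j, g (j + m * T) = g j := by
  intro m
  induction m using Int.induction_on with
  | zero => intro j; simp
  | succ n ih =>
      intro j
      have e : j + ((n:ℤ)+1) * T = (j + n * T) + T := by ring
      rw [e, hg, ih]
  | pred n ih =>
      intro j
      have h := hg (j + (-(n:ℤ)-1) * T)
      have e : j + (-(n:ℤ)-1) * T + T = j + (-(n:ℤ)) * T := by ring
      rw [e, ih] at h
      exact h.symm

lemma per_residue {g : ℤ → ℝ} {T : ℤ} (hT : 0 < T) (hg : ∀ j, g (j + T) = g j) (j : ℤ) :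
    ∃ j₀, 1 ≤ j₀ ∧ j₀ ≤ T ∧ g j = g j₀ := by
  have e1 := Int.emod_nonneg (j - 1) (ne_of_gt hT)
  have e2 := Int.emod_lt_of_pos (j - 1) hT
  have e3 := Int.emod_add_mul_ediv (j - 1) T
  refine ⟨1 + (j - 1) % T, by linarith, by linarith, ?_⟩
  have e' : 1 + (j - 1) % T + ((j-1)/T) * T = j := by linarith
  calc g j = g (1 + (j - 1) % T + ((j-1)/T) * T) := (congrArg g e').symm
    _ = g (1 + (j - 1) % T) := per_iterate hg _ _

/-- (p,q)-minimizers are (np,nq)-minimizers. -/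
lemma perMin_mul (hS : SatisfiesAE r C S) {p : ℕ} (hp : 1 ≤ p) {q : ℤ} {x : ℤ → ℝ}
    (hx : PerMin S p q x) (n : ℕ) (hn : 1 ≤ n) : PerMin S (n * p) ((n:ℤ) * q) x := by
  have hp' : (0:ℤ) < (p:ℤ) := by exact_mod_cast hp
  have hnp : 1 ≤ n * p := Nat.one_le_iff_ne_zero.mpr (by positivity)
  have hcast : ((n * p : ℕ):ℤ) = (n:ℤ) * (p:ℤ) := by push_cast; ring
  have hxper' : tau ((n * p : ℕ):ℤ) ((n:ℤ) * q) x = x := by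
    have h := per_zsmul hx.1 (n:ℤ)
    rw [tau_congr x hcast rfl]
    exact h
  have hWn : ∀ w : ℤ → ℝ, tau (p:ℤ) q w = w → Wper S (n * p) w = (n:ℝ) * Wper S p w := by
    intro w hw
    rw [Wper_eq_Ioc, Wper_eq_Ioc]
    rw [show ((n*p : ℕ):ℤ) = (n:ℤ) * (p:ℤ) from hcast]
    exact sum_per_mul hp' (S_per hS hw) n
  obtain ⟨y, hy⟩ := exists_perMin hS (n * p) hnp ((n:ℤ) * q)
  have hyt : PerMin S (n * p) ((n:ℤ) * q) (tau (p:ℤ) q y) := PerMin.tau hS hnp hy (p:ℤ) q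
  have hyy : tau (p:ℤ) q y = y := by
    by_contra hne
    have hyper := hy.1
    rcases perMin_strict_order hS hnp hyt hy hne with h | h
    · -- y (i - p) + q < y i everywhere
      have h' : ∀ i, y (i - (p:ℤ)) + (q:ℝ) < y i := fun i => h i
      have grow : ∀ m : ℕ, 1 ≤ m → ∀ i : ℤ, y (i - (m:ℤ)*(p:ℤ)) + (m:ℝ)*(q:ℝ) < y i := by
        intro m hm
        induction m with
        | zero => omega
        | succ k ih =>
            rcases Nat.eq_or_lt_of_le hm with he | hlt
            · intro i
              have e : i - (((0:ℕ)+1:ℕ):ℤ)*(p:ℤ) = i - (p:ℤ) := by push_cast; ring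
              rw [show k = 0 by omega]
              rw [show (((0:ℕ)+1:ℕ):ℝ) = (1:ℝ) by norm_num, e]
              have := h' i
              linarith
            · have hk1 : 1 ≤ k := by omega
              intro i
              have h1 := ih hk1 (i - (p:ℤ))
              have h2 := h' i
              have e : i - (((k+1:ℕ)):ℤ)*(p:ℤ) = (i - (p:ℤ)) - (k:ℤ)*(p:ℤ) := by
                push_cast; ring
              rw [e]
              push_cast
              linarith
      have hper0 := congrFun hyper 0
      rw [tau_apply] at hper0
      have hg := grow n hn 0
      rw [show (0:ℤ) - (n:ℤ)*(p:ℤ) = 0 - ((n*p:ℕ):ℤ) by rw [hcast]] at hg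
      have hc2 : ((((n:ℤ) * q : ℤ)):ℝ) = (n:ℝ) * (q:ℝ) := by push_cast; ring
      linarith [hg, hper0, hc2]
    · have h' : ∀ i, y i < y (i - (p:ℤ)) + (q:ℝ) := fun i => h i
      have grow : ∀ m : ℕ, 1 ≤ m → ∀ i : ℤ, y i < y (i - (m:ℤ)*(p:ℤ)) + (m:ℝ)*(q:ℝ) := by
        intro m hm
        induction m with
        | zero => omega
        | succ k ih =>
            rcases Nat.eq_or_lt_of_le hm with he | hlt
            · intro i
              have e : i - (((0:ℕ)+1:ℕ):ℤ)*(p:ℤ) = i - (p:ℤ) := by push_cast; ring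
              rw [show k = 0 by omega]
              rw [show (((0:ℕ)+1:ℕ):ℝ) = (1:ℝ) by norm_num, e]
              have := h' i
              linarith
            · have hk1 : 1 ≤ k := by omega
              intro i
              have h1 := ih hk1 (i - (p:ℤ))
              have h2 := h' i
              have e : i - (((k+1:ℕ)):ℤ)*(p:ℤ) = (i - (p:ℤ)) - (k:ℤ)*(p:ℤ) := by
                push_cast; ring
              rw [e]
              push_cast
              linarith
      have hper0 := congrFun hyper 0
      rw [tau_apply] at hper0
      have hg := grow n hn 0
      rw [show (0:ℤ) - (n:ℤ)*(p:ℤ) = 0 - ((n*p:ℕ):ℤ) by rw [hcast]] at hg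
      have hc2 : ((((n:ℤ) * q : ℤ)):ℝ) = (n:ℝ) * (q:ℝ) := by push_cast; ring
      linarith [hg, hper0, hc2]
  refine ⟨hxper', fun w hw => ?_⟩
  have h1 : Wper S (n*p) x = (n:ℝ) * Wper S p x := hWn x hx.1
  have h2 : Wper S (n*p) y = (n:ℝ) * Wper S p y := hWn y hyy
  have h3 : Wper S p x ≤ Wper S p y := hx.2 y hyy
  have h4 : Wper S (n*p) y ≤ Wper S (n*p) w := hy.2 w hw
  calc Wper S (n*p) x = (n:ℝ) * Wper S p x := h1
    _ ≤ (n:ℝ) * Wper S p y := mul_le_mul_of_nonneg_left h3 (by positivity)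
    _ = Wper S (n*p) y := h2.symm
    _ ≤ Wper S (n*p) w := h4

end AM6

section AM7

variable {r : ℕ} {C : ℝ} {S : ℤ → (ℤ → ℝ) → ℝ}

lemma Wdiff_eq_sum (hS : SatisfiesAE r C S) {x z : ℤ → ℝ} {a b : ℤ}
    (hsupp : ∀ k, z k ≠ x k → a ≤ k ∧ k ≤ b) :
    Wdiff S x (fun k => z k - x k)
      = ∑ j ∈ Finset.Icc (a - (r:ℤ)) (b + (r:ℤ)), (S j z - S j x) := by
  have h1 : Wdiff S x (fun k => z k - x k) = ∑' j : ℤ, (S j z - S j x) := by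
    unfold Wdiff
    apply tsum_congr
    intro j
    congr 1
    exact congrArg (S j) (funext fun i => by show x i + (z i - x i) = z i; ring)
  rw [h1]
  apply tsum_eq_sum
  intro j hj
  rw [Finset.mem_Icc, not_and_or] at hj
  rw [sub_eq_zero]
  apply hS.finRange
  intro m hm
  rw [abs_le] at hm
  by_contra hne
  obtain ⟨h1', h2'⟩ := hsupp m hne
  rcases hj with hj | hj
  · rw [not_le] at hj; omega
  · rw [not_le] at hj; omega

lemma perMin_globalMin (hS : SatisfiesAE r C S) {p : ℕ} (hp : 1 ≤ p) {q : ℤ} {x : ℤ → ℝ}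
    (hx : PerMin S p q x) : GlobalMin S x := by
  intro y hy
  classical
  obtain ⟨a, b, hab, hsupp⟩ : ∃ a b : ℤ, a ≤ b ∧ ∀ k, y k ≠ 0 → a ≤ k ∧ k ≤ b := by
    rcases Set.eq_empty_or_nonempty (Function.support y) with he | hne
    · refine ⟨0, 0, le_refl 0, fun k hk => ?_⟩
      exfalso
      have hmem : k ∈ Function.support y := hk
      rw [he] at hmem
      exact hmem
    · obtain ⟨k₀, hk₀⟩ := hne
      obtain ⟨lo, hlo⟩ := hy.bddBelow
      obtain ⟨hi, hhi⟩ := hy.bddAbove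
      exact ⟨lo, hi, le_trans (hlo hk₀) (hhi hk₀), fun k hk => ⟨hlo hk, hhi hk⟩⟩
  have hr0 : (0:ℤ) ≤ (r:ℤ) := Int.ofNat_nonneg r
  set N : ℕ := (b - a + 2*(r:ℤ) + 1).toNat with hN
  have hN1 : 1 ≤ N := by rw [hN]; omega
  have hp' : (0:ℤ) < (p:ℤ) := by exact_mod_cast hp
  set T : ℤ := ((N * p : ℕ):ℤ) with hT
  have hTval : T = (N:ℤ) * (p:ℤ) := by rw [hT]; push_cast; ring
  have hNZ : (0:ℤ) < (N:ℤ) := by exact_mod_cast hN1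
  have hT0 : 0 < T := by rw [hTval]; positivity
  have hTbig : b - a + 2*(r:ℤ) + 1 ≤ T := by
    have h1 : b - a + 2*(r:ℤ) + 1 ≤ (N:ℤ) := by rw [hN]; omega
    have h2 : (N:ℤ) ≤ (N:ℤ) * (p:ℤ) := le_mul_of_one_le_right hNZ.le hp'
    rw [hTval]
    linarith
  have hxN := perMin_mul hS hp hx N hN1
  set Y : ℤ → ℝ := fun k => y (a + (k - a) % T) with hY
  have hYper : ∀ k, Y (k - T) = Y k := by
    intro k
    rw [hY]
    simp only
    congr 2
    rw [show k - T - a = (k - a) + T * (-1) by ring, Int.add_mul_emod_self_left]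
  have hz : tau T ((N:ℤ) * q) (fun k => x k + Y k) = fun k => x k + Y k := by
    funext k
    show x (k - T) + Y (k - T) + (((N:ℤ)*q : ℤ):ℝ) = x k + Y k
    have h1 := congrFun hxN.1 k
    rw [tau_apply] at h1
    rw [hYper k]
    linarith [h1]
  have hmin := hxN.2 _ hz
  -- identification of Wdiff with the periodic action difference
  have hYy : ∀ m : ℤ, a - 2*(r:ℤ) ≤ m → m ≤ a + T - 1 → Y m = y m := by
    intro m h1 h2
    rcases le_or_gt a m with hc | hc
    · have hmod : (m - a) % T = m - a :=
        Int.emod_eq_of_lt (show (0:ℤ) ≤ m - a by omega) (show m - a < T by omega)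
      rw [hY]
      simp only
      rw [hmod]
      congr 1
      omega
    · have h0 : (m - a + T) % T = m - a + T :=
        Int.emod_eq_of_lt (show (0:ℤ) ≤ m - a + T by omega) (show m - a + T < T by omega)
      have h1 : (m - a) % T = (m - a + T) % T := by
        rw [show m - a + T = (m - a) + T * 1 by ring, Int.add_mul_emod_self_left]
      have hmod : (m - a) % T = m - a + T := h1.trans h0
      have hY1 : Y m = y (m + T) := by
        rw [hY]
        simp only
        rw [hmod]
        congr 1
        omega
      have hy1 : y (m + T) = 0 := by
        by_contra hne
        have := (hsupp _ hne).2
        omega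
      have hy2 : y m = 0 := by
        by_contra hne
        have := (hsupp _ hne).1
        omega
      rw [hY1, hy1, hy2]
  set f : ℤ → ℝ := fun j => S j (fun k => x k + y k) - S j x with hf
  have hfzero : ∀ j : ℤ, b + (r:ℤ) < j → f j = 0 := by
    intro j hj
    rw [hf]
    simp only
    rw [sub_eq_zero]
    apply hS.finRange
    intro m hm
    rw [abs_le] at hm
    have : y m = 0 := by
      by_contra hne
      have := (hsupp _ hne).2
      omega
    rw [this, add_zero]
  have hgper : ∀ j : ℤ, (fun j => S j (fun k => x k + Y k) - S j x) (j + T)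
      = (fun j => S j (fun k => x k + Y k) - S j x) j := by
    intro j
    simp only
    rw [S_per hS hz j, S_per hS hxN.1 j]
  have hkey : Wper S (N*p) (fun k => x k + Y k) - Wper S (N*p) x
      = Wdiff S x y := by
    rw [Wper_eq_Ioc, Wper_eq_Ioc, ← Finset.sum_sub_distrib]
    have e0 : ((N*p : ℕ):ℤ) = T := hT.symm
    rw [e0]
    have e1 : ∑ j ∈ Finset.Ioc (0:ℤ) T, (S j (fun k => x k + Y k) - S j x)
        = ∑ j ∈ Finset.Ioc (a - (r:ℤ) - 1) (a - (r:ℤ) - 1 + T),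
            (S j (fun k => x k + Y k) - S j x) :=
      (sum_per_shift hT0 hgper (a - (r:ℤ) - 1)).symm
    rw [e1]
    have e2 : ∑ j ∈ Finset.Ioc (a - (r:ℤ) - 1) (a - (r:ℤ) - 1 + T),
        (S j (fun k => x k + Y k) - S j x)
        = ∑ j ∈ Finset.Ioc (a - (r:ℤ) - 1) (a - (r:ℤ) - 1 + T), f j := by
      apply Finset.sum_congr rfl
      intro j hj
      rw [Finset.mem_Ioc] at hj
      rw [hf]
      simp only
      congr 1
      apply hS.finRange
      intro m hm
      rw [abs_le] at hm
      rw [hYy m (by omega) (by omega)]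
    rw [e2]
    have e3 : ∑ j ∈ Finset.Ioc (a - (r:ℤ) - 1) (a - (r:ℤ) - 1 + T), f j
        = ∑ j ∈ Finset.Ioc (a - (r:ℤ) - 1) (b + (r:ℤ)), f j := by
      rw [sum_Ioc_split f (show a - (r:ℤ) - 1 ≤ b + (r:ℤ) by omega)
        (show b + (r:ℤ) ≤ a - (r:ℤ) - 1 + T by omega)]
      have : ∑ j ∈ Finset.Ioc (b + (r:ℤ)) (a - (r:ℤ) - 1 + T), f j = 0 :=
        Finset.sum_eq_zero fun j hj => hfzero j (by
          rw [Finset.mem_Ioc] at hj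
          exact hj.1)
      rw [this, add_zero]
    rw [e3]
    have e4 : Finset.Ioc (a - (r:ℤ) - 1) (b + (r:ℤ)) = Finset.Icc (a - (r:ℤ)) (b + (r:ℤ)) := by
      ext j
      rw [Finset.mem_Ioc, Finset.mem_Icc]
      omega
    rw [e4]
    have e5 := Wdiff_eq_sum hS (x := x) (z := fun k => x k + y k) (a := a) (b := b)
      (fun k hk => hsupp k (fun h0 => hk (by show x k + y k = x k; rw [h0, add_zero])))
    have e6 : Wdiff S x y = Wdiff S x (fun k => x k + y k - x k) :=
      congrArg (Wdiff S x) (funext fun k => by ring)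
    rw [e6, e5]
  linarith [hmin, hkey.symm.le, hkey.le]

end AM7

section AM8

variable {r : ℕ} {C : ℝ} {S : ℤ → (ℤ → ℝ) → ℝ}

set_option maxHeartbeats 1000000 in
lemma globalMin_perMin (hS : SatisfiesAE r C S) {p : ℕ} (hp : 1 ≤ p) {q : ℤ} {x : ℤ → ℝ}
    (hxper : tau (p:ℤ) q x = x) (hx : GlobalMin S x) : PerMin S p q x := by
  classical
  refine ⟨hxper, fun w hw => ?_⟩
  obtain ⟨y, hy⟩ := exists_perMin hS p hp q
  have hyW : Wper S p y ≤ Wper S p w := hy.2 w hw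
  by_contra hlt
  push_neg at hlt
  have hlt2 : Wper S p y < Wper S p x := lt_of_le_of_lt hyW hlt
  have hp' : (0:ℤ) < (p:ℤ) := by exact_mod_cast hp
  have hr0 : (0:ℤ) ≤ (r:ℤ) := Int.ofNat_nonneg r
  set D : ℝ := Wper S p x - Wper S p y with hD
  have hD0 : 0 < D := by rw [hD]; linarith
  set f : ℤ → ℝ := fun j => S j y - S j x with hf
  have hfper : ∀ j, f (j + (p:ℤ)) = f j := by
    intro j
    simp only [hf]
    rw [S_per hS hy.1, S_per hS hxper]
  have hsumf : ∑ j ∈ Finset.Ioc (0:ℤ) (p:ℤ), f j = -D := by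
    simp only [hf]
    rw [Finset.sum_sub_distrib, ← Wper_eq_Ioc, ← Wper_eq_Ioc]
    rw [hD]; ring
  have hne : (Finset.Icc (1:ℤ) (p:ℤ)).Nonempty := ⟨1, by rw [Finset.mem_Icc]; omega⟩
  set F : ℝ := (Finset.Icc (1:ℤ) (p:ℤ)).sup' hne (fun j => |f j|) with hFdef
  have hFbd : ∀ j, |f j| ≤ F := by
    intro j
    obtain ⟨j₀, h1, h2, h3⟩ := per_residue hp' hfper j
    rw [h3]
    exact Finset.le_sup' (fun j => |f j|) (Finset.mem_Icc.mpr ⟨h1, h2⟩)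
  have hF0 : 0 ≤ F := le_trans (abs_nonneg _) (hFbd 1)
  set gd : ℤ → ℝ := fun k => y k - x k with hgd
  have hgdper : ∀ k, gd (k + (p:ℤ)) = gd k := by
    intro k
    simp only [hgd]
    have h1 := per_apply hy.1 k 1
    have h2 := per_apply hxper k 1
    rw [show k + 1 * (p:ℤ) = k + (p:ℤ) by ring] at h1 h2
    rw [h1, h2]
    ring
  set J : ℝ := (Finset.Icc (1:ℤ) (p:ℤ)).sup' hne (fun k => |gd k|) with hJdef
  have hJbd : ∀ k, |y k - x k| ≤ J := by
    intro k
    obtain ⟨k₀, h1, h2, h3⟩ := per_residue hp' hgdper k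
    show |gd k| ≤ J
    rw [h3]
    exact Finset.le_sup' (fun k => |gd k|) (Finset.mem_Icc.mpr ⟨h1, h2⟩)
  have hJ0 : 0 ≤ J := le_trans (abs_nonneg _) (hJbd 1)
  set G : ℝ := (2*(r:ℝ)+1) * (C * ((2*(r:ℝ)+1) * J)) with hG
  have hr0' : (0:ℝ) ≤ 2*(r:ℝ)+1 := by positivity
  have hG0 : 0 ≤ G := by
    rw [hG]
    exact mul_nonneg hr0' (mul_nonneg hS.C_pos.le (mul_nonneg hr0' hJ0))
  obtain ⟨M₁, hM₁⟩ := exists_nat_gt ((2*G + (p:ℝ)*F) / (2*D))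
  set M : ℕ := M₁ + r + 1 with hM
  set a : ℤ := 1 - (M:ℤ)*(p:ℤ) with ha
  set b : ℤ := (M:ℤ)*(p:ℤ) with hb
  have hMr : (r:ℤ) + 1 ≤ (M:ℤ) := by rw [hM]; push_cast; omega
  have hMp : ((r:ℤ) + 1) * (p:ℤ) ≤ (M:ℤ)*(p:ℤ) := mul_le_mul_of_nonneg_right hMr hp'.le
  have hab2 : a + (r:ℤ) ≤ b - (r:ℤ) := by
    rw [ha, hb]
    nlinarith [hp', hr0, hMp]
  set z : ℤ → ℝ := fun k => if a ≤ k ∧ k ≤ b then y k else x k with hz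
  have hzx : ∀ k, |z k - x k| ≤ J := by
    intro k
    rw [hz]
    simp only
    split
    · exact hJbd k
    · simp [hJ0]
  have hzy : ∀ k, a ≤ k → k ≤ b → z k = y k := by
    intro k h1 h2
    rw [hz]; simp only; rw [if_pos ⟨h1, h2⟩]
  have hzxeq : ∀ k, ¬(a ≤ k ∧ k ≤ b) → z k = x k := fun k hk => by
    rw [hz]; simp only; rw [if_neg hk]
  have hglue : ∀ j : ℤ, |S j z - S j x| ≤ C * ((2*(r:ℝ)+1) * J) := by
    intro j
    set zj : ℤ → ℝ := fun m => if |m - j| ≤ (r:ℤ) then z m else x m with hzj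
    have h1 : S j z = S j zj := hS.finRange j z zj (fun m hm => by
      rw [hzj]; simp only; rw [if_pos hm])
    have h2 := S_lipschitz hS j (z := zj) (z' := x) (Finset.Icc (j - (r:ℤ)) (j + (r:ℤ)))
      (fun m hm => by
        rw [hzj]
        simp only
        rw [if_neg]
        intro habs
        apply hm
        rw [Finset.mem_Icc]
        rw [abs_le] at habs
        omega)
    have h3 : ∑ m ∈ Finset.Icc (j - (r:ℤ)) (j + (r:ℤ)), |zj m - x m| ≤ (2*(r:ℝ)+1) * J := by
      have hcard : (Finset.Icc (j - (r:ℤ)) (j + (r:ℤ))).card = 2*r + 1 := by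
        rw [Int.card_Icc]; omega
      calc ∑ m ∈ Finset.Icc (j - (r:ℤ)) (j + (r:ℤ)), |zj m - x m|
          ≤ (Finset.Icc (j - (r:ℤ)) (j + (r:ℤ))).card • J := by
            apply Finset.sum_le_card_nsmul
            intro m _
            rw [hzj]; simp only
            split
            · exact hzx m
            · simp [hJ0]
        _ = (2*(r:ℝ)+1) * J := by rw [hcard, nsmul_eq_mul]; push_cast; ring
    rw [h1]
    calc |S j zj - S j x| ≤ C * ∑ m ∈ Finset.Icc (j - (r:ℤ)) (j + (r:ℤ)), |zj m - x m| := h2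
      _ ≤ C * ((2*(r:ℝ)+1) * J) := mul_le_mul_of_nonneg_left h3 hS.C_pos.le
  have hvfin : (Function.support (fun k => z k - x k)).Finite := by
    apply Set.Finite.subset (Set.finite_Icc a b)
    intro k hk
    rw [Function.mem_support] at hk
    rw [Set.mem_Icc]
    by_contra hc
    apply hk
    rw [hzxeq k hc]
    ring
  have h0 := hx (fun k => z k - x k) hvfin
  rw [Wdiff_eq_sum hS (a := a) (b := b) (fun k hk => by
    by_contra hc
    exact hk (hzxeq k hc))] at h0
  set c1 : ℤ := a - (r:ℤ) - 1 with hc1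
  set c2 : ℤ := a + (r:ℤ) with hc2
  set c3 : ℤ := b - (r:ℤ) with hc3
  set c4 : ℤ := b + (r:ℤ) with hc4
  have hIcc : Finset.Icc (a - (r:ℤ)) (b + (r:ℤ)) = Finset.Ioc c1 c4 := by
    ext j
    rw [Finset.mem_Icc, Finset.mem_Ioc]
    omega
  rw [hIcc] at h0
  have hc12 : c1 ≤ c2 := by omega
  have hc23 : c2 ≤ c3 := hab2
  have hc34 : c3 ≤ c4 := by omega
  have hsplit1 : ∑ j ∈ Finset.Ioc c1 c4, (S j z - S j x)
      = ∑ j ∈ Finset.Ioc c1 c2, (S j z - S j x)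
        + (∑ j ∈ Finset.Ioc c2 c3, (S j z - S j x)
          + ∑ j ∈ Finset.Ioc c3 c4, (S j z - S j x)) := by
    rw [sum_Ioc_split _ hc12 (le_trans hc23 hc34), sum_Ioc_split _ hc23 hc34]
  have hmid : ∑ j ∈ Finset.Ioc c2 c3, (S j z - S j x) = ∑ j ∈ Finset.Ioc c2 c3, f j := by
    apply Finset.sum_congr rfl
    intro j hj
    rw [Finset.mem_Ioc] at hj
    simp only [hf]
    congr 1
    apply hS.finRange
    intro m hm
    rw [abs_le] at hm
    rw [hzy m (by omega) (by omega)]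
  have hglue1 : |∑ j ∈ Finset.Ioc c1 c2, (S j z - S j x)| ≤ G := by
    calc |∑ j ∈ Finset.Ioc c1 c2, (S j z - S j x)|
        ≤ ((c2 - c1).toNat : ℝ) * (C * ((2*(r:ℝ)+1) * J)) := sum_bound c1 c2 hglue
      _ = G := by
          rw [show c2 - c1 = 2*(r:ℤ) + 1 by omega,
            show (2*(r:ℤ) + 1).toNat = 2*r+1 by omega, hG]
          push_cast
          ring
  have hglue2 : |∑ j ∈ Finset.Ioc c3 c4, (S j z - S j x)| ≤ G := by
    have hCJ : 0 ≤ C * ((2*(r:ℝ)+1) * J) := mul_nonneg hS.C_pos.le (mul_nonneg hr0' hJ0)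
    calc |∑ j ∈ Finset.Ioc c3 c4, (S j z - S j x)|
        ≤ ((c4 - c3).toNat : ℝ) * (C * ((2*(r:ℝ)+1) * J)) := sum_bound c3 c4 hglue
      _ ≤ G := by
          rw [show c4 - c3 = 2*(r:ℤ) by omega, show (2*(r:ℤ)).toNat = 2*r by omega, hG]
          have hcle : ((2*r : ℕ) : ℝ) ≤ 2*(r:ℝ)+1 := by push_cast; norm_num
          exact mul_le_mul_of_nonneg_right hcle hCJ
  set L : ℤ := c3 - c2 with hL
  have hL0 : 0 ≤ L := by omega
  set K : ℤ := L / (p:ℤ) with hK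
  have hK0 : 0 ≤ K := Int.ediv_nonneg hL0 hp'.le
  have hKp1 : K * (p:ℤ) ≤ L := by
    have h1 := Int.emod_add_mul_ediv L (p:ℤ)
    have h2 := Int.emod_nonneg L (ne_of_gt hp')
    rw [hK]
    linarith
  have hKp2 : L < K * (p:ℤ) + (p:ℤ) := by
    have h1 := Int.emod_add_mul_ediv L (p:ℤ)
    have h2 := Int.emod_lt_of_pos L hp'
    rw [hK]
    linarith
  have hsplitmid : ∑ j ∈ Finset.Ioc c2 c3, f j
      = ∑ j ∈ Finset.Ioc c2 (c2 + K * (p:ℤ)), f j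
        + ∑ j ∈ Finset.Ioc (c2 + K*(p:ℤ)) c3, f j :=
    sum_Ioc_split f (by nlinarith [hK0, hp']) (by linarith [hKp1])
  have hmid1 : ∑ j ∈ Finset.Ioc c2 (c2 + K * (p:ℤ)), f j = (K:ℝ) * (-D) := by
    rcases eq_or_lt_of_le hK0 with hKz | hKpos
    · rw [← hKz]
      simp
    · have hTper : ∀ j, f (j + K * (p:ℤ)) = f j := fun j => per_iterate hfper K j
      have h1 : ∑ j ∈ Finset.Ioc c2 (c2 + K*(p:ℤ)), f j
          = ∑ j ∈ Finset.Ioc (0:ℤ) (K*(p:ℤ)), f j :=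
        sum_per_shift (mul_pos hKpos hp') hTper c2
      have h2 := sum_per_mul hp' hfper K.toNat
      rw [show ((K.toNat:ℕ):ℤ) = K from Int.toNat_of_nonneg hK0] at h2
      rw [h1, h2, hsumf]
      have e := Int.toNat_of_nonneg hK0
      have e2 : ((K.toNat:ℕ):ℝ) = (K:ℝ) := by exact_mod_cast congrArg (fun t : ℤ => (t:ℝ)) e
      rw [e2]
  have hmid2 : |∑ j ∈ Finset.Ioc (c2 + K*(p:ℤ)) c3, f j| ≤ (p:ℝ) * F := by
    calc |∑ j ∈ Finset.Ioc (c2 + K*(p:ℤ)) c3, f j|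
        ≤ ((c3 - (c2 + K*(p:ℤ))).toNat : ℝ) * F := sum_bound _ _ hFbd
      _ ≤ (p:ℝ) * F := by
          apply mul_le_mul_of_nonneg_right _ hF0
          have hle : c3 - (c2 + K*(p:ℤ)) ≤ (p:ℤ) := by linarith [hKp2]
          have hn : (c3 - (c2 + K*(p:ℤ))).toNat ≤ p := by omega
          exact_mod_cast hn
  have hKlb : 2*(M:ℤ) - 2*(r:ℤ) - 2 ≤ K := by
    have hL' : L = 2*(M:ℤ)*(p:ℤ) - 2*(r:ℤ) - 1 := by
      rw [hL, hc3, hc2, ha, hb]; ring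
    have h1 : (2*(M:ℤ) - 2*(r:ℤ) - 2) * (p:ℤ) ≤ K * (p:ℤ) := by
      nlinarith [hKp2, hL', mul_nonneg hr0 (show (0:ℤ) ≤ (p:ℤ) - 1 by linarith)]
    exact le_of_mul_le_mul_right h1 hp'
  have hfinal : (K:ℝ) * D ≤ 2*G + (p:ℝ)*F := by
    have a1 := abs_le.mp hglue1
    have a2 := abs_le.mp hglue2
    have a3 := abs_le.mp hmid2
    rw [hsplit1, hmid, hsplitmid, hmid1] at h0
    linarith [a1.1, a2.1, a3.1, h0]
  have hKr : 2*(M₁:ℝ) ≤ (K:ℝ) := by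
    have h1 : (2*(M₁:ℤ)) ≤ K := by
      have : 2*(M:ℤ) - 2*(r:ℤ) - 2 = 2*(M₁:ℤ) := by rw [hM]; push_cast; ring
      linarith [hKlb]
    exact_mod_cast h1
  have hcontr : 2*(M₁:ℝ) * D ≤ 2*G + (p:ℝ)*F :=
    le_trans (mul_le_mul_of_nonneg_right hKr hD0.le) hfinal
  have hM₁' : (2*G + (p:ℝ)*F) / (2*D) < (M₁:ℝ) := hM₁
  have h2D : (0:ℝ) < 2*D := by linarith
  rw [div_lt_iff₀ h2D] at hM₁'
  nlinarith [hM₁', hcontr]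

end AM8


/-- the collection of `(p,q)`-minimizers is nonempty, closed under pointwise
convergence, shift-invariant and strictly ordered; every `(p,q)`-minimizer is Birkhoff;
and `x ∈ X_{p,q}` is a `(p,q)`-minimizer iff it is an `(np,nq)`-minimizer for every `n ≥ 1`
iff it is a global minimizer. -/
theorem periodic_minimizers_properties
    (r : ℕ) (C : ℝ) (S : ℤ → (ℤ → ℝ) → ℝ) (hS : SatisfiesAE r C S)
    (p : ℕ) (hp : 1 ≤ p) (q : ℤ) :
    (∃ x : ℤ → ℝ, PerMin S p q x) ∧
    (∀ x : ℕ → ℤ → ℝ, (∀ n, PerMin S p q (x n)) → ∀ xinf : ℤ → ℝ,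
      (∀ i : ℤ, Filter.Tendsto (fun n => x n i) Filter.atTop (𝓝 (xinf i))) →
      PerMin S p q xinf) ∧
    (∀ x : ℤ → ℝ, PerMin S p q x → ∀ k l : ℤ, PerMin S p q (tau k l x)) ∧
    (∀ x y : ℤ → ℝ, PerMin S p q x → PerMin S p q y → x ≠ y →
      (∀ i : ℤ, x i < y i) ∨ (∀ i : ℤ, y i < x i)) ∧
    (∀ x : ℤ → ℝ, PerMin S p q x → Birkhoff x) ∧
    (∀ x : ℤ → ℝ, tau (p : ℤ) q x = x →
      ((PerMin S p q x ↔ ∀ n : ℕ, 1 ≤ n → PerMin S (n * p) ((n : ℤ) * q) x) ∧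
       (PerMin S p q x ↔ GlobalMin S x))) := by
  refine ⟨exists_perMin hS p hp q,
    fun x hx xinf hlim => perMin_closed hS p q x hx xinf hlim,
    fun x hx k l => PerMin.tau hS hp hx k l,
    fun x y hx hy hne => perMin_strict_order hS hp hx hy hne,
    fun x hx => perMin_birkhoff hS hp hx,
    fun x hxper => ⟨⟨fun hx n hn => perMin_mul hS hp hx n hn, fun h => ?_⟩,
      ⟨fun hx => perMin_globalMin hS hp hx, fun hg => globalMin_perMin hS hp hxper hg⟩⟩⟩
  have h1 := h 1 (le_refl 1)
  simp only [Nat.cast_one, one_mul] at h1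
  exact h1
end

section
/- Let S_j be local potentials satisfying conditions A–E, let ω ∈ ℝ∖ℚ, let (p,q) ∈ ℕ×ℤ satisfy q/p < ω < (q+1)/p, and let y^min be a (p,q)-periodic Birkhoff minimizer. Then for every ε > 0 and every integer k ≥ 2 there exist local potentials S_j^{ε,1} satisfying conditions A–E with ||S_j^{ε,1} − S_j||_{C^k} ≤ ε/3, and a real number ξ, such that: whenever M ∈ ℕ, M ≥ 1, and x ∈ X_{Mp,Mq} satisfies ξ ≤ x_{k_i} + l_i ≤ ξ + 1/(2p) for integers 0 ≤ k_1 < k_2 < … < k_N < Mp and l_1,…,l_N ∈ ℤ, then W^{ε,1}_{Mp}(x) − W^{ε,1}_{Mp}(y^min) ≥ N·ε/(3·C_k·p^k), where W^{ε,1}_{Mp}(x) := Σ_{j=1}^{Mp} S_j^{ε,1}(x) and C_k > 0 is a constant depending only on k. -/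
open Filter Topology

namespace FirstPert
open Function
abbrev Conf := ℤ → ℝ





open Function


variable {F : Conf → ℝ}

lemma pd_eq_deriv (F : Conf → ℝ) (i : ℤ) (x : Conf) (t0 : ℝ) :
    pd F i (update x i t0) = deriv (fun t => F (update x i t)) t0 := by
  unfold pd
  simp only [update_idem, update_self]

lemma diffAt_update (hd1 : ∀ i x, DifferentiableAt ℝ (fun t => F (update x i t)) (x i))
    (i : ℤ) (x : Conf) (t0 : ℝ) :
    DifferentiableAt ℝ (fun t => F (update x i t)) t0 := by
  have h := hd1 i (update x i t0)
  rw [update_self] at h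
  simpa only [update_idem] using h

lemma pd_antitone
    (hd2 : ∀ i k x, DifferentiableAt ℝ (fun t => pd F i (update x k t)) (x k))
    (hmono : ∀ i k, i ≠ k → ∀ x, pd (pd F i) k x ≤ 0)
    (i m : ℤ) (him : i ≠ m) (x : Conf) :
    Antitone (fun t => pd F i (update x m t)) := by
  apply antitone_of_deriv_nonpos
  · intro t0
    exact diffAt_update (F := pd F i) (fun k x => hd2 i k x) m x t0
  · intro t0
    have h : deriv (fun t => pd F i (update x m t)) t0 = pd (pd F i) m (update x m t0) :=
      (pd_eq_deriv (pd F i) m x t0).symm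
    rw [h]
    exact hmono i m him _

lemma pd_comparison
    (hd2 : ∀ i k x, DifferentiableAt ℝ (fun t => pd F i (update x k t)) (x k))
    (hmono : ∀ i k, i ≠ k → ∀ x, pd (pd F i) k x ≤ 0) :
    ∀ (D : Finset ℤ) (i : ℤ), i ∉ D → ∀ x y : Conf, (∀ m, m ∉ D → x m = y m) → x ≤ y →
      pd F i y ≤ pd F i x := by
  intro D
  induction D using Finset.induction_on with
  | empty =>
    intro i _ x y hxy _
    have : x = y := funext fun m => hxy m (by simp)
    rw [this]
  | @insert m D hm ih =>
    intro i hi x y hxy hle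
    have him : i ≠ m := fun h => hi (by simp [h])
    have hiD : i ∉ D := fun h => hi (by simp [h])
    set y' := update y m (x m) with hy'
    have h1 : pd F i y' ≤ pd F i x := by
      apply ih i hiD x y'
      · intro n hn
        by_cases hnm : n = m
        · subst hnm; simp [hy']
        · rw [hy', update_of_ne hnm]
          exact hxy n (by simp [hnm, hn])
      · intro n
        by_cases hnm : n = m
        · subst hnm; simp [hy']
        · rw [hy', update_of_ne hnm]; exact hle n
    have h2 : pd F i y ≤ pd F i y' := by
      have := (pd_antitone hd2 hmono i m him y) (hle m)
      rw [hy']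
      simpa [update_eq_self] using this
    exact h2.trans h1

lemma increment_comparison
    (hd1 : ∀ i x, DifferentiableAt ℝ (fun t => F (update x i t)) (x i))
    (hd2 : ∀ i k x, DifferentiableAt ℝ (fun t => pd F i (update x k t)) (x k))
    (hmono : ∀ i k, i ≠ k → ∀ x, pd (pd F i) k x ≤ 0)
    (D : Finset ℤ) (i : ℤ) (hi : i ∉ D)
    (x y : Conf) (hxy : ∀ m, m ∉ D → x m = y m) (hle : x ≤ y) (a b : ℝ) (hab : a ≤ b) :
    F (update y i b) - F (update y i a) ≤ F (update x i b) - F (update x i a) := by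
  have hmorph : Monotone (fun t => F (update x i t) - F (update y i t)) := by
    apply monotone_of_deriv_nonneg
    · intro t0
      exact (diffAt_update hd1 i x t0).sub (diffAt_update hd1 i y t0)
    · intro t0
      rw [deriv_fun_sub (diffAt_update hd1 i x t0) (diffAt_update hd1 i y t0)]
      rw [← pd_eq_deriv F i x t0, ← pd_eq_deriv F i y t0]
      have : pd F i (update y i t0) ≤ pd F i (update x i t0) := by
        apply pd_comparison hd2 hmono D i hi
        · intro m hm
          by_cases hmi : m = i
          · subst hmi; simp
          · rw [update_of_ne hmi, update_of_ne hmi]; exact hxy m hm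
        · intro n
          by_cases hni : n = i
          · subst hni; simp
          · rw [update_of_ne hni, update_of_ne hni]; exact hle n
      linarith
  have := hmorph hab
  simp only at this
  linarith

lemma submod_aux
    (hd1 : ∀ i x, DifferentiableAt ℝ (fun t => F (update x i t)) (x i))
    (hd2 : ∀ i k x, DifferentiableAt ℝ (fun t => pd F i (update x k t)) (x k))
    (hmono : ∀ i k, i ≠ k → ∀ x, pd (pd F i) k x ≤ 0) :
    ∀ (D : Finset ℤ) (x y : Conf), (∀ m, m ∉ D → x m = y m) →
      F (x ⊓ y) + F (x ⊔ y) ≤ F x + F y := by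
  intro D
  induction D using Finset.induction_on with
  | empty =>
    intro x y hxy
    have : x = y := funext fun m => hxy m (by simp)
    subst this
    simp
  | @insert m D hm ih =>
    intro x y hxy
    have key : ∀ x y : Conf, (∀ n, n ∉ insert m D → x n = y n) → x m ≤ y m →
        F (x ⊓ y) + F (x ⊔ y) ≤ F x + F y := by
      intro x y hxy h
      set x' := update x m (y m) with hx'
      have hxy' : ∀ n, n ∉ D → x' n = y n := by
        intro n hn
        by_cases hnm : n = m
        · subst hnm; simp [hx']
        · rw [hx', update_of_ne hnm]; exact hxy n (by simp [hnm, hn])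
      have ihh := ih x' y hxy'
      have hsup : x' ⊔ y = x ⊔ y := by
        funext n
        by_cases hnm : n = m
        · subst hnm
          simp only [Pi.sup_apply, hx', update_self]
          rw [sup_idem, sup_eq_right.mpr h]
        · simp only [Pi.sup_apply, hx', update_of_ne hnm]
      have hinf : x' ⊓ y = update (x ⊓ y) m (y m) := by
        funext n
        by_cases hnm : n = m
        · subst hnm
          simp only [Pi.inf_apply, hx', update_self, inf_idem]
        · simp only [Pi.inf_apply, hx', update_of_ne hnm]
      have hC := increment_comparison hd1 hd2 hmono D m hm (x ⊓ y) x
        (by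
          intro n hn
          by_cases hnm : n = m
          · subst hnm
            simp only [Pi.inf_apply]
            exact inf_eq_left.mpr h
          · simp only [Pi.inf_apply]
            rw [hxy n (by simp [hnm, hn]), inf_idem])
        inf_le_left (x m) (y m) h
      have e1 : update x m (x m) = x := update_eq_self m x
      have e2 : update (x ⊓ y) m (x m) = x ⊓ y := by
        have : (x ⊓ y) m = x m := inf_eq_left.mpr h
        rw [← this]; exact update_eq_self m _
      rw [e1, e2, ← hx', ← hinf] at hC
      rw [← hsup] at *
      linarith
    rcases le_total (x m) (y m) with h | h
    · exact key x y hxy h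
    · have := key y x (fun n hn => (hxy n hn).symm) h
      rw [inf_comm y x, sup_comm y x] at this
      linarith





noncomputable def bseq (t : Conf) (v : ℕ → Conf) : ℕ → Conf
  | 0 => t
  | s + 1 => v s ⊔ bseq t v s

noncomputable def aseq (t : Conf) (v : ℕ → Conf) (s : ℕ) : Conf := v s ⊓ bseq t v s

noncomputable def sortN : ℕ → (ℕ → Conf) → (ℕ → Conf)
  | 0, z => z
  | (M + 1), z =>
      fun s => if s < M then aseq (sortN M z M) (sortN M z) s
        else if s = M then bseq (sortN M z M) (sortN M z) M else sortN M z s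

variable {W : Conf → ℝ}

lemma sortN_ge (M : ℕ) (z : ℕ → Conf) : ∀ s, M ≤ s → sortN M z s = z s := by
  induction M with
  | zero => intro s _; rfl
  | succ M ih =>
    intro s hs
    have h1 : ¬ s < M := by omega
    have h2 : ¬ s = M := by omega
    simp only [sortN, h1, h2, if_false]
    exact ih s (by omega)

lemma tele (hsub : ∀ a b : Conf, W (a ⊓ b) + W (a ⊔ b) ≤ W a + W b) :
    ∀ (M : ℕ) (t : Conf) (v : ℕ → Conf),
      (∑ s ∈ Finset.range M, W (aseq t v s)) + W (bseq t v M) ≤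
      (∑ s ∈ Finset.range M, W (v s)) + W t := by
  intro M
  induction M with
  | zero => intro t v; simp [bseq]
  | succ M ih =>
    intro t v
    rw [Finset.sum_range_succ, Finset.sum_range_succ]
    have h1 : W (aseq t v M) + W (bseq t v (M + 1)) ≤ W (v M) + W (bseq t v M) := by
      have := hsub (v M) (bseq t v M)
      simpa [aseq, bseq] using this
    have := ih t v
    linarith

lemma sortN_sum_le (hsub : ∀ a b : Conf, W (a ⊓ b) + W (a ⊔ b) ≤ W a + W b) :
    ∀ (M : ℕ) (z : ℕ → Conf),
      ∑ s ∈ Finset.range M, W (sortN M z s) ≤ ∑ m ∈ Finset.range M, W (z m) := by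
  intro M
  induction M with
  | zero => intro z; simp
  | succ M ih =>
    intro z
    rw [Finset.sum_range_succ (fun s => W (sortN (M+1) z s)),
        Finset.sum_range_succ (fun m => W (z m))]
    have hM : sortN (M + 1) z M = bseq (sortN M z M) (sortN M z) M := by
      simp [sortN]
    have hlt : ∀ s ∈ Finset.range M, W (sortN (M+1) z s)
        = W (aseq (sortN M z M) (sortN M z) s) := by
      intro s hs
      have : s < M := Finset.mem_range.mp hs
      simp [sortN, this]
    rw [Finset.sum_congr rfl hlt, hM]
    have h1 := tele hsub M (sortN M z M) (sortN M z)
    have h2 := ih z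
    have h4 : W (sortN M z M) = W (z M) := by rw [sortN_ge M z M le_rfl]
    linarith

lemma bseq_mono (t : Conf) (v : ℕ → Conf) (s : ℕ) (i : ℤ) :
    bseq t v s i ≤ bseq t v (s + 1) i := by
  simp only [bseq, Pi.sup_apply]
  exact le_sup_right

lemma sortN_adj : ∀ (M : ℕ) (z : ℕ → Conf) (i : ℤ) (s : ℕ), s + 1 < M →
    sortN M z s i ≤ sortN M z (s + 1) i := by
  intro M
  induction M with
  | zero => intro z i s hs; omega
  | succ M ih =>
    intro z i s hs
    have hsM : s < M := by omega
    have h1 : sortN (M+1) z s = aseq (sortN M z M) (sortN M z) s := by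
      simp [sortN, hsM]
    by_cases h2 : s + 1 < M
    · have h3 : sortN (M+1) z (s+1) = aseq (sortN M z M) (sortN M z) (s+1) := by
        simp [sortN, h2]
      rw [h1, h3]
      simp only [aseq, Pi.inf_apply]
      apply le_inf
      · exact inf_le_left.trans (ih z i s h2)
      · exact inf_le_right.trans (bseq_mono _ _ s i)
    · have hsM1 : s + 1 = M := by omega
      have h3 : sortN (M+1) z (s+1) = bseq (sortN M z M) (sortN M z) (s + 1) := by
        simp only [sortN, hsM1]
        simp
      rw [h1, h3]
      simp only [aseq, bseq, Pi.inf_apply, Pi.sup_apply]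
      exact inf_le_left.trans le_sup_left

lemma sortN_mono (M : ℕ) (z : ℕ → Conf) (i : ℤ) :
    ∀ s t, s ≤ t → t < M → sortN M z s i ≤ sortN M z t i := by
  intro s t hst
  induction t, hst using Nat.le_induction with
  | base => intro _; exact le_rfl
  | succ t hst ih =>
    intro ht
    exact (ih (by omega)).trans (sortN_adj M z i t ht)

lemma ins_multiset : ∀ (M : ℕ) (t : Conf) (v : ℕ → Conf) (i : ℤ),
    (bseq t v M i) ::ₘ Multiset.map (fun s => aseq t v s i) (Multiset.range M)
      = (t i) ::ₘ Multiset.map (fun s => v s i) (Multiset.range M) := by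
  intro M
  induction M with
  | zero => intro t v i; simp [bseq]
  | succ M ih =>
    intro t v i
    rw [Multiset.range_succ, Multiset.map_cons, Multiset.map_cons]
    have pair : (bseq t v (M+1) i) ::ₘ (aseq t v M i) ::ₘ
          Multiset.map (fun s => aseq t v s i) (Multiset.range M)
        = (v M i) ::ₘ (bseq t v M i) ::ₘ
          Multiset.map (fun s => aseq t v s i) (Multiset.range M) := by
      rcases le_total (v M i) (bseq t v M i) with h | h
      · have e1 : bseq t v (M+1) i = bseq t v M i := by
          simp only [bseq, Pi.sup_apply]; exact sup_eq_right.mpr h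
        have e2 : aseq t v M i = v M i := by
          simp only [aseq, Pi.inf_apply]; exact inf_eq_left.mpr h
        rw [e1, e2, Multiset.cons_swap]
      · have e1 : bseq t v (M+1) i = v M i := by
          simp only [bseq, Pi.sup_apply]; exact sup_eq_left.mpr h
        have e2 : aseq t v M i = bseq t v M i := by
          simp only [aseq, Pi.inf_apply]; exact inf_eq_right.mpr h
        rw [e1, e2]
    rw [pair, ih t v i, Multiset.cons_swap]

lemma sortN_multiset : ∀ (M : ℕ) (z : ℕ → Conf) (i : ℤ),
    Multiset.map (fun s => sortN M z s i) (Multiset.range M)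
      = Multiset.map (fun m => z m i) (Multiset.range M) := by
  intro M
  induction M with
  | zero => intro z i; simp
  | succ M ih =>
    intro z i
    rw [Multiset.range_succ, Multiset.map_cons, Multiset.map_cons]
    have hM : sortN (M + 1) z M = bseq (sortN M z M) (sortN M z) M := by simp [sortN]
    have hcong : Multiset.map (fun s => sortN (M+1) z s i) (Multiset.range M)
        = Multiset.map (fun s => aseq (sortN M z M) (sortN M z) s i) (Multiset.range M) := by
      apply Multiset.map_congr rfl
      intro s hs
      have : s < M := Multiset.mem_range.mp hs
      simp [sortN, this]
    rw [hM, hcong, ins_multiset M (sortN M z M) (sortN M z) i]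
    rw [sortN_ge M z M le_rfl, ih z i]

lemma sorted_unique (M : ℕ) (w1 w2 : ℕ → ℝ)
    (h1 : ∀ s t, s ≤ t → t < M → w1 s ≤ w1 t)
    (h2 : ∀ s t, s ≤ t → t < M → w2 s ≤ w2 t)
    (hms : Multiset.map w1 (Multiset.range M) = Multiset.map w2 (Multiset.range M)) :
    ∀ s, s < M → w1 s = w2 s := by
  have key : ∀ (w : ℕ → ℝ), (∀ s t, s ≤ t → t < M → w s ≤ w t) →
      List.Pairwise (· ≤ ·) (List.map w (List.range M)) := by
    intro w hw
    rw [List.pairwise_iff_getElem]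
    intro a b ha hb hab
    simp only [List.length_map, List.length_range] at ha hb
    simp only [List.getElem_map, List.getElem_range]
    exact hw a b (le_of_lt hab) hb
  have hperm : (List.map w1 (List.range M)).Perm (List.map w2 (List.range M)) := by
    rw [← Multiset.coe_eq_coe]
    have e : ∀ (w : ℕ → ℝ), (↑(List.map w (List.range M)) : Multiset ℝ)
        = Multiset.map w (Multiset.range M) := by
      intro w
      rfl
    rw [e, e, hms]
  have heq := List.Perm.eq_of_pairwise (fun a b _ _ h1 h2 => le_antisymm h1 h2) (key w1 h1) (key w2 h2) hperm
  intro s hs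
  have hs1 : s < (List.map w1 (List.range M)).length := by simp [hs]
  have hs2 : s < (List.map w2 (List.range M)).length := by simp [hs]
  have := List.getElem_of_eq heq hs1
  simpa using this




open Real

noncomputable def gbase (p : ℕ) (c : ℝ) : ℝ → ℝ := fun t =>
  Real.smoothTransition ((Real.cos (2*π*(t - c)) - Real.cos (2*π*(3/(8*(p:ℝ))))) /
    (Real.cos (2*π*(1/(4*(p:ℝ)))) - Real.cos (2*π*(3/(8*(p:ℝ))))))

variable {p : ℕ} (hp : 1 ≤ p) (c : ℝ)

lemma cos_anti {u v : ℝ} (hu : 0 ≤ u) (huv : u ≤ v) (hv : v ≤ π) :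
    Real.cos v ≤ Real.cos u := by
  rcases eq_or_lt_of_le huv with h | h
  · rw [h]
  · exact le_of_lt (Real.cos_lt_cos_of_nonneg_of_le_pi hu hv h)

lemma hp1 (hp : 1 ≤ p) : (1:ℝ) ≤ (p:ℝ) := by exact_mod_cast hp

lemma hval_b_le (hp : 1 ≤ p) : 2*π*(3/(8*(p:ℝ))) ≤ π := by
  have hπ := Real.pi_pos
  have h1 : (1:ℝ) ≤ (p:ℝ) := hp1 hp
  have e : 2*π*(3/(8*(p:ℝ))) = 3*π/(4*(p:ℝ)) := by
    field_simp; ring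
  rw [e, div_le_iff₀ (by positivity)]
  nlinarith [hπ, h1]

lemma hval_a_nonneg (hp : 1 ≤ p) : 0 ≤ 2*π*(1/(4*(p:ℝ))) := by
  have hπ := Real.pi_pos
  have h1 : (1:ℝ) ≤ (p:ℝ) := hp1 hp
  positivity

lemma hAB (hp : 1 ≤ p) :
    Real.cos (2*π*(3/(8*(p:ℝ)))) < Real.cos (2*π*(1/(4*(p:ℝ)))) := by
  have hπ := Real.pi_pos
  have h1 : (1:ℝ) ≤ (p:ℝ) := hp1 hp
  have hpp : (0:ℝ) < (p:ℝ) := by linarith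
  apply Real.cos_lt_cos_of_nonneg_of_le_pi (hval_a_nonneg hp) (hval_b_le hp)
  rw [mul_lt_mul_iff_right₀ (by positivity)]
  rw [div_lt_div_iff₀ (by positivity) (by positivity)]
  nlinarith

lemma gbase_contDiff (hp : 1 ≤ p) : ContDiff ℝ (⊤:ℕ∞) (gbase p c) := by
  apply Real.smoothTransition.contDiff.comp
  apply ContDiff.div_const
  apply ContDiff.sub _ contDiff_const
  exact (Real.contDiff_cos).comp (by fun_prop)

lemma gbase_nonneg (t : ℝ) : 0 ≤ gbase p c t := Real.smoothTransition.nonneg _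

lemma gbase_le_one (t : ℝ) : gbase p c t ≤ 1 := Real.smoothTransition.le_one _

lemma gbase_int_period (t : ℝ) (l : ℤ) : gbase p c (t + l) = gbase p c t := by
  unfold gbase
  congr 2
  have : 2*π*(t + l - c) = 2*π*(t - c) + l * (2*π) := by ring
  rw [this, Real.cos_add_int_mul_two_pi]

lemma gbase_periodic : Function.Periodic (gbase p c) 1 := by
  intro t
  have := gbase_int_period (p := p) c t 1
  simpa using this

lemma gbase_plateau (hp : 1 ≤ p) (t : ℝ) (ht : |t - c| ≤ 1/(4*(p:ℝ))) :
    gbase p c t = 1 := by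
  have hπ := Real.pi_pos
  have hcos : Real.cos (2*π*(1/(4*(p:ℝ)))) ≤ Real.cos (2*π*(t-c)) := by
    rw [← Real.cos_abs (2*π*(t-c))]
    apply cos_anti (abs_nonneg _)
    · rw [abs_mul, abs_of_nonneg (by positivity : (0:ℝ) ≤ 2*π)]
      apply mul_le_mul_of_nonneg_left ht (by positivity)
    · calc 2*π*(1/(4*(p:ℝ))) ≤ 2*π*(3/(8*(p:ℝ))) := by
            have h1 : (1:ℝ) ≤ (p:ℝ) := hp1 hp
            apply mul_le_mul_of_nonneg_left _ (by positivity)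
            rw [div_le_div_iff₀ (by positivity) (by positivity)]
            nlinarith
          _ ≤ π := hval_b_le hp
  apply Real.smoothTransition.one_of_one_le
  rw [le_div_iff₀ (by linarith [hAB (p := p) hp])]
  linarith [hAB (p := p) hp]

lemma gbase_vanish (hp : 1 ≤ p) (t : ℝ)
    (ht : 3/(8*(p:ℝ)) ≤ Int.fract (t - c) ∧ Int.fract (t - c) ≤ 1 - 3/(8*(p:ℝ))) :
    gbase p c t = 0 := by
  have hπ := Real.pi_pos
  have h1 : (1:ℝ) ≤ (p:ℝ) := hp1 hp
  set s := Int.fract (t - c) with hs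
  have hb2 : 3/(8*(p:ℝ)) ≤ 3/8 := by
    rw [div_le_div_iff₀ (by positivity) (by norm_num)]
    nlinarith
  have hcoseq : Real.cos (2*π*(t-c)) = Real.cos (2*π*s) := by
    have : t - c = s + (⌊t - c⌋ : ℤ) := by
      rw [hs]
      have := Int.floor_add_fract (t - c)
      linarith
    rw [this]
    have e : 2*π*(s + (⌊t - c⌋:ℤ)) = 2*π*s + (⌊t - c⌋:ℤ) * (2*π) := by ring
    rw [e, Real.cos_add_int_mul_two_pi]
  have hcos : Real.cos (2*π*s) ≤ Real.cos (2*π*(3/(8*(p:ℝ)))) := by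
    rcases le_total s (1/2) with h | h
    · apply cos_anti (by positivity)
      · apply mul_le_mul_of_nonneg_left ht.1 (by positivity)
      · calc 2*π*s ≤ 2*π*(1/2) := by
              apply mul_le_mul_of_nonneg_left h (by positivity)
            _ = π := by ring
    · have : Real.cos (2*π*s) = Real.cos (2*π*(1-s)) := by
        have e : 2*π*(1-s) = -(2*π*s) + ((1:ℤ):ℝ) * (2*π) := by push_cast; ring
        rw [e, Real.cos_add_int_mul_two_pi, Real.cos_neg]
      rw [this]
      apply cos_anti (by positivity)
      · have := ht.2
        nlinarith
      · calc 2*π*(1-s) ≤ 2*π*(1/2) := by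
              apply mul_le_mul_of_nonneg_left (by linarith) (by positivity)
            _ = π := by ring
  apply Real.smoothTransition.zero_of_nonpos
  rw [hcoseq]
  apply div_nonpos_of_nonpos_of_nonneg
  · linarith
  · linarith [hAB (p := p) hp]






open Function

lemma periodic_deriv {f : ℝ → ℝ} (hf : ContDiff ℝ (⊤:ℕ∞) f) (h : Periodic f 1) :
    Periodic (deriv f) 1 := by
  intro t
  have e : (fun x : ℝ => f (x + 1)) = f := funext fun x => h x
  have := deriv_comp_add_const f 1 t
  rw [e] at this
  rw [← this]

lemma contDiff_iterate_deriv {f : ℝ → ℝ} (hf : ContDiff ℝ (⊤:ℕ∞) f) (n : ℕ) :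
    ContDiff ℝ (⊤:ℕ∞) (deriv^[n] f) :=
  ContDiff.iterate_deriv n hf

lemma diff_iterate_deriv {f : ℝ → ℝ} (hf : ContDiff ℝ (⊤:ℕ∞) f) (n : ℕ) :
    Differentiable ℝ (deriv^[n] f) :=
  (contDiff_iterate_deriv hf n).differentiable (by simp)

lemma periodic_iterate_deriv {f : ℝ → ℝ} (hf : ContDiff ℝ (⊤:ℕ∞) f) (h : Periodic f 1) (n : ℕ) :
    Periodic (deriv^[n] f) 1 := by
  induction n with
  | zero => exact h
  | succ n ih =>
    rw [Function.iterate_succ_apply']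
    exact periodic_deriv (contDiff_iterate_deriv hf n) ih

lemma bound_of_periodic {f : ℝ → ℝ} (hf : Continuous f) (h : Periodic f 1) :
    ∃ C : ℝ, ∀ t, |f t| ≤ C := by
  obtain ⟨C0, hC0⟩ := (isCompact_Icc (a := (0:ℝ)) (b := 1)).exists_bound_of_continuousOn
    hf.continuousOn
  refine ⟨C0, fun t => ?_⟩
  have e : f t = f (Int.fract t) := by
    have := h.sub_int_mul_eq (x := t) ⌊t⌋
    rw [mul_one] at this
    rw [← this, Int.self_sub_floor]
  rw [e]
  have := hC0 (Int.fract t) ⟨Int.fract_nonneg t, le_of_lt (Int.fract_lt_one t) |>.trans (by norm_num)⟩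
  simpa using this

lemma bounds_up_to {f : ℝ → ℝ} (hf : ContDiff ℝ (⊤:ℕ∞) f) (h : Periodic f 1) (k : ℕ) :
    ∃ B : ℝ, 1 ≤ B ∧ ∀ n ≤ k, ∀ t, |deriv^[n] f t| ≤ B := by
  induction k with
  | zero =>
    obtain ⟨C0, hC0⟩ := bound_of_periodic (hf.continuous) h
    refine ⟨max 1 C0, le_max_left _ _, fun n hn t => ?_⟩
    interval_cases n
    exact (hC0 t).trans (le_max_right _ _)
  | succ k ih =>
    obtain ⟨B, hB1, hB⟩ := ih
    obtain ⟨C0, hC0⟩ := bound_of_periodic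
      ((contDiff_iterate_deriv hf (k+1)).continuous) (periodic_iterate_deriv hf h (k+1))
    refine ⟨max B C0, hB1.trans (le_max_left _ _), fun n hn t => ?_⟩
    rcases Nat.lt_or_ge n (k+1) with h' | h'
    · exact (hB n (by omega) t).trans (le_max_left _ _)
    · have : n = k + 1 := by omega
      subst this
      exact (hC0 t).trans (le_max_right _ _)

lemma iterate_deriv_const_mul {f : ℝ → ℝ} (hf : ContDiff ℝ (⊤:ℕ∞) f) (d : ℝ) (n : ℕ) :
    deriv^[n] (fun t => d * f t) = fun t => d * deriv^[n] f t := by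
  induction n with
  | zero => rfl
  | succ n ih =>
    rw [Function.iterate_succ_apply', Function.iterate_succ_apply', ih]
    funext t
    rw [deriv_const_mul d ((diff_iterate_deriv hf n) t)]

lemma pd_comp_eval (φ : ℝ → ℝ) (hφ : Differentiable ℝ φ) (j i : ℤ) :
    pd (fun x : ℤ → ℝ => φ (x j)) i
      = if i = j then (fun x : ℤ → ℝ => deriv φ (x j)) else (fun _ => 0) := by
  by_cases h : i = j
  · subst h
    rw [if_pos rfl]
    funext x
    unfold pd
    simp only [update_self]
  · rw [if_neg h]
    funext x
    unfold pd
    have e : (fun t => φ (update x i t j)) = fun _ => φ (x j) := by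
      funext t
      rw [update_of_ne (Ne.symm h)]
    rw [e, deriv_const]

lemma pd_zero (i : ℤ) : pd (fun _ : ℤ → ℝ => (0:ℝ)) i = fun _ => 0 := by
  funext x
  unfold pd
  rw [deriv_const]

lemma pdList_comp_eval {g : ℝ → ℝ} (hg : ContDiff ℝ (⊤:ℕ∞) g) (j : ℤ) :
    ∀ L : List ℤ,
      (pdList (fun y : ℤ → ℝ => g (y j)) L = fun x => deriv^[L.length] g (x j)) ∨
      (pdList (fun y : ℤ → ℝ => g (y j)) L = fun _ => 0) := by
  intro L
  induction L with
  | nil => left; rfl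
  | cons i L ih =>
    have e : pdList (fun y : ℤ → ℝ => g (y j)) (i :: L)
        = pd (pdList (fun y : ℤ → ℝ => g (y j)) L) i := rfl
    rcases ih with h | h
    · by_cases hij : i = j
      · left
        subst hij
        rw [e, h, pd_comp_eval _ (diff_iterate_deriv hg L.length) i i, if_pos rfl]
        funext x
        rw [List.length_cons, Function.iterate_succ_apply']
      · right
        rw [e, h, pd_comp_eval _ (diff_iterate_deriv hg L.length) j i, if_neg hij]
    · right
      rw [e, h, pd_zero]




attribute [local instance] Classical.propDecidable

def isGood (p : ℕ) (t c : ℝ) : Prop :=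
  3/(8*(p:ℝ)) ≤ Int.fract (t - c) ∧ Int.fract (t - c) ≤ 1 - 3/(8*(p:ℝ))

lemma bad_card (p : ℕ) (hp : 1 ≤ p) (t : ℝ) :
    ((Finset.range (8*p)).filter
      (fun i : ℕ => ¬ isGood p t ((i:ℝ)/((8*p:ℕ):ℝ)))).card ≤ 6 := by
  have hp1 : (1:ℝ) ≤ (p:ℝ) := by exact_mod_cast hp
  have hm : ((8*p:ℕ):ℝ) = 8*(p:ℝ) := by push_cast; ring
  have hmpos : (0:ℝ) < 8*(p:ℝ) := by linarith
  set β : ℝ := 3/(8*(p:ℝ)) with hβ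
  have hβpos : 0 < β := by positivity
  have hβ3 : 8*(p:ℝ) * β = 3 := by rw [hβ]; field_simp
  set f : ℕ → ℤ := fun i => (i:ℤ) + (8*p:ℕ) *
    (if Int.fract (t - (i:ℝ)/((8*p:ℕ):ℝ)) < β then ⌊t - (i:ℝ)/((8*p:ℕ):ℝ)⌋
     else ⌊t - (i:ℝ)/((8*p:ℕ):ℝ)⌋ + 1) with hf
  have key : ∀ i : ℕ, i ∈ (Finset.range (8*p)).filter
      (fun i : ℕ => ¬ isGood p t ((i:ℝ)/((8*p:ℕ):ℝ))) →
      8*(p:ℝ)*t - 3 < ((f i : ℤ) : ℝ) ∧ ((f i : ℤ) : ℝ) < 8*(p:ℝ)*t + 3 := by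
    intro i hi
    rw [Finset.mem_filter] at hi
    obtain ⟨hir, hbad⟩ := hi
    rw [isGood, not_and_or, not_le, not_le] at hbad
    set u : ℝ := t - (i:ℝ)/((8*p:ℕ):ℝ) with hu
    set n : ℤ := if Int.fract u < β then ⌊u⌋ else ⌊u⌋ + 1 with hn
    have hfr := Int.floor_add_fract u
    have habs : |u - ((n : ℤ) : ℝ)| < β := by
      by_cases hc : Int.fract u < β
      · rw [hn, if_pos hc, abs_lt]
        have := Int.fract_nonneg u
        constructor <;> push_cast <;> linarith
      · rw [hn, if_neg hc]
        have h2 : 1 - β < Int.fract u := by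
          rcases hbad with h | h
          · exact absurd h (not_lt.mpr (not_lt.mp hc))
          · exact h
        have := Int.fract_lt_one u
        rw [abs_lt]
        constructor <;> push_cast <;> linarith
    have hfeq : f i = (i:ℤ) + ((8*p:ℕ):ℤ) * n := by
      simp only [hf]; rfl
    have hfi : ((f i : ℤ) : ℝ) = (i:ℝ) + 8*(p:ℝ) * ((n : ℤ) : ℝ) := by
      rw [hfeq]
      push_cast
      ring
    have hmu : 8*(p:ℝ) * u = 8*(p:ℝ)*t - (i:ℝ) := by
      rw [hu, ← hm]
      field_simp
    rw [abs_lt] at habs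
    set w : ℝ := ((n : ℤ) : ℝ) with hw
    have h1 : 8*(p:ℝ) * (u - w) < 3 := by
      calc 8*(p:ℝ) * (u - w) < 8*(p:ℝ) * β := mul_lt_mul_of_pos_left habs.2 hmpos
        _ = 3 := hβ3
    have h2 : -3 < 8*(p:ℝ) * (u - w) := by
      calc (-3:ℝ) = 8*(p:ℝ) * (-β) := by rw [mul_neg, hβ3]
        _ < _ := mul_lt_mul_of_pos_left habs.1 hmpos
    constructor
    · rw [hfi]; nlinarith [h1, hmu]
    · rw [hfi]; nlinarith [h2, hmu]
  calc ((Finset.range (8*p)).filter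
        (fun i : ℕ => ¬ isGood p t ((i:ℝ)/((8*p:ℕ):ℝ)))).card
      ≤ (Finset.Icc (⌊8*(p:ℝ)*t⌋ - 2) (⌊8*(p:ℝ)*t⌋ + 3)).card := by
        apply Finset.card_le_card_of_injOn f
        · intro i hi
          obtain ⟨hlo, hhi⟩ := key i hi
          rw [Finset.mem_coe, Finset.mem_Icc]
          have hfl := Int.floor_le (8*(p:ℝ)*t)
          have hfu := Int.lt_floor_add_one (8*(p:ℝ)*t)
          constructor
          · have hr : ((⌊8*(p:ℝ)*t⌋ - 3 : ℤ) : ℝ) < ((f i : ℤ) : ℝ) := by push_cast; linarith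
            have : (⌊8*(p:ℝ)*t⌋ - 3 : ℤ) < f i := by exact_mod_cast hr
            omega
          · have hr : ((f i : ℤ) : ℝ) < ((⌊8*(p:ℝ)*t⌋ + 4 : ℤ) : ℝ) := by push_cast; linarith
            have : f i < (⌊8*(p:ℝ)*t⌋ + 4 : ℤ) := by exact_mod_cast hr
            omega
        · intro i hi i' hi' heq
          rw [Finset.mem_coe, Finset.mem_filter, Finset.mem_range] at hi hi'
          have e1 : (f i) % ((8*p:ℕ):ℤ) = (i : ℤ) := by
            rw [hf]
            simp only
            rw [Int.add_mul_emod_self_left]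
            apply Int.emod_eq_of_lt (by positivity)
            exact_mod_cast hi.1
          have e2 : (f i') % ((8*p:ℕ):ℤ) = (i' : ℤ) := by
            rw [hf]
            simp only
            rw [Int.add_mul_emod_self_left]
            apply Int.emod_eq_of_lt (by positivity)
            exact_mod_cast hi'.1
          rw [heq] at e1
          rw [e1] at e2
          exact_mod_cast e2
    _ ≤ 6 := by
        rw [Int.card_Icc]
        simp
        omega

lemma exists_center (p : ℕ) (hp : 1 ≤ p) (T : Finset ℝ) (hT : T.card ≤ p) :
    ∃ c : ℝ, ∀ t ∈ T, isGood p t c := by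
  by_contra hcon
  push_neg at hcon
  have hsub : Finset.range (8*p) ⊆ T.biUnion (fun t =>
      (Finset.range (8*p)).filter (fun i : ℕ => ¬ isGood p t ((i:ℝ)/((8*p:ℕ):ℝ)))) := by
    intro i hi
    obtain ⟨t, ht, hbad⟩ := hcon ((i:ℝ)/((8*p:ℕ):ℝ))
    rw [Finset.mem_biUnion]
    exact ⟨t, ht, Finset.mem_filter.mpr ⟨hi, hbad⟩⟩
  have h1 : (Finset.range (8*p)).card ≤ 6 * T.card := by
    calc (Finset.range (8*p)).card ≤ _ := Finset.card_le_card hsub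
      _ ≤ ∑ t ∈ T, ((Finset.range (8*p)).filter
            (fun i : ℕ => ¬ isGood p t ((i:ℝ)/((8*p:ℕ):ℝ)))).card :=
        Finset.card_biUnion_le
      _ ≤ ∑ _t ∈ T, 6 := Finset.sum_le_sum (fun t _ => bad_card p hp t)
      _ = 6 * T.card := by rw [Finset.sum_const]; ring
  rw [Finset.card_range] at h1
  omega




lemma periodic_sum_step (f : ℤ → ℝ) (n : ℕ) (hper : ∀ j, f (j + n) = f j) (a : ℤ) :
    ∑ j ∈ Finset.Icc (a+1+1) (a+1+(n:ℤ)), f j = ∑ j ∈ Finset.Icc (a+1) (a+(n:ℤ)), f j := by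
  rcases Nat.eq_zero_or_pos n with hn | hn
  · subst hn; simp
  have hn1 : (1:ℤ) ≤ (n:ℤ) := by exact_mod_cast hn
  have split1 : Finset.Icc (a+1) (a+(n:ℤ)+1) = insert (a+1) (Finset.Icc (a+1+1) (a+1+(n:ℤ))) := by
    ext j
    simp only [Finset.mem_Icc, Finset.mem_insert]
    omega
  have split2 : Finset.Icc (a+1) (a+(n:ℤ)+1) = insert (a+(n:ℤ)+1) (Finset.Icc (a+1) (a+(n:ℤ))) := by
    ext j
    simp only [Finset.mem_Icc, Finset.mem_insert]
    omega
  have h1 : ∑ j ∈ Finset.Icc (a+1) (a+(n:ℤ)+1), f j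
      = f (a+1) + ∑ j ∈ Finset.Icc (a+1+1) (a+1+(n:ℤ)), f j := by
    rw [split1, Finset.sum_insert (by simp only [Finset.mem_Icc]; omega)]
  have h2 : ∑ j ∈ Finset.Icc (a+1) (a+(n:ℤ)+1), f j
      = f (a+(n:ℤ)+1) + ∑ j ∈ Finset.Icc (a+1) (a+(n:ℤ)), f j := by
    rw [split2, Finset.sum_insert (by simp only [Finset.mem_Icc]; omega)]
  have h3 : f (a+(n:ℤ)+1) = f (a+1) := by
    have := hper (a+1)
    rw [← this]
    ring_nf
  linarith

lemma periodic_sum_shift (f : ℤ → ℝ) (n : ℕ) (hper : ∀ j, f (j + n) = f j) :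
    ∀ a : ℤ, ∑ j ∈ Finset.Icc (a+1) (a+(n:ℤ)), f j = ∑ j ∈ Finset.Icc 1 (n:ℤ), f j := by
  intro a
  induction a using Int.induction_on with
  | zero => simp
  | succ a ih =>
    rw [show ((a:ℤ)+1) = (a:ℤ)+1 by rfl]
    rw [periodic_sum_step f n hper a]
    exact ih
  | pred a ih =>
    have hstep := periodic_sum_step f n hper (-(a:ℤ)-1)
    have e1 : Finset.Icc (-(a:ℤ)-1+1+1) (-(a:ℤ)-1+1+(n:ℤ)) = Finset.Icc (-(a:ℤ)+1) (-(a:ℤ)+(n:ℤ)) := by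
      congr 1 <;> ring
    rw [e1] at hstep
    have final := hstep.symm.trans ih
    exact final

lemma periodic_sum_window (f : ℤ → ℝ) (n : ℕ) (hper : ∀ j, f (j + n) = f j) (a : ℤ) :
    ∑ j ∈ Finset.Icc (1 - a) ((n:ℤ) - a), f j = ∑ j ∈ Finset.Icc 1 (n:ℤ), f j := by
  have := periodic_sum_shift f n hper (-a)
  rw [show (-a + 1) = 1 - a by ring, show (-a + (n:ℤ)) = (n:ℤ) - a by ring] at this
  exact this

lemma periodic_iter (f : ℤ → ℝ) (p : ℕ) (hper : ∀ j, f (j + p) = f j) (m : ℕ) :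
    ∀ j, f (j + (m*p:ℕ)) = f j := by
  induction m with
  | zero => intro j; simp
  | succ m ih =>
    intro j
    have e : ((((m+1)*p:ℕ)):ℤ) = ((m*p:ℕ):ℤ) + (p:ℕ) := by push_cast; ring
    rw [e, ← add_assoc, hper, ih]

lemma periodic_sum_mult (f : ℤ → ℝ) (p : ℕ) (hper : ∀ j, f (j + p) = f j) (M : ℕ) :
    ∑ j ∈ Finset.Icc 1 ((M*p:ℕ):ℤ), f j = M * ∑ j ∈ Finset.Icc 1 (p:ℤ), f j := by
  induction M with
  | zero => simp
  | succ M ih =>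
    have e0 : ∀ n : ℕ, Finset.Icc (1:ℤ) (n:ℤ) = Finset.Ioc (0:ℤ) (n:ℤ) := by
      intro n; ext j; simp only [Finset.mem_Icc, Finset.mem_Ioc]; omega
    have key : ∑ j ∈ Finset.Ioc ((M*p:ℕ):ℤ) (((M+1)*p:ℕ):ℤ), f j
        = ∑ j ∈ Finset.Icc 1 (p:ℤ), f j := by
      have he : Finset.Ioc ((M*p:ℕ):ℤ) (((M+1)*p:ℕ):ℤ)
          = (Finset.Ioc (0:ℤ) (p:ℤ)).map (addRightEmbedding ((M*p:ℕ):ℤ)) := by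
        rw [Finset.map_add_right_Ioc]
        congr 1
        · ring
        · push_cast; ring
      rw [he, Finset.sum_map, e0]
      apply Finset.sum_congr rfl
      intro j _
      exact periodic_iter f p hper M j
    have hle1 : (0:ℤ) ≤ ((M*p:ℕ):ℤ) := by positivity
    have hle2 : ((M*p:ℕ):ℤ) ≤ (((M+1)*p:ℕ):ℤ) := by
      have : M*p ≤ (M+1)*p := Nat.mul_le_mul_right p (Nat.le_succ M)
      exact_mod_cast this
    have hunion : Finset.Ioc (0:ℤ) ((M*p:ℕ):ℤ) ∪ Finset.Ioc ((M*p:ℕ):ℤ) (((M+1)*p:ℕ):ℤ)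
        = Finset.Ioc (0:ℤ) (((M+1)*p:ℕ):ℤ) := by
      ext j
      simp only [Finset.mem_union, Finset.mem_Ioc]
      omega
    have hdisj : Disjoint (Finset.Ioc (0:ℤ) ((M*p:ℕ):ℤ))
        (Finset.Ioc ((M*p:ℕ):ℤ) (((M+1)*p:ℕ):ℤ)) := by
      rw [Finset.disjoint_left]
      intro j h1 h2
      rw [Finset.mem_Ioc] at h1 h2
      omega
    have hsplit : ∑ j ∈ Finset.Ioc (0:ℤ) (((M+1)*p:ℕ):ℤ), f j
        = ∑ j ∈ Finset.Ioc (0:ℤ) ((M*p:ℕ):ℤ), f j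
          + ∑ j ∈ Finset.Ioc ((M*p:ℕ):ℤ) (((M+1)*p:ℕ):ℤ), f j := by
      rw [← hunion, Finset.sum_union hdisj]
    rw [e0, hsplit, ← e0, ih, key]
    push_cast
    ring





open Function


lemma pd_add_comp_same (F : Conf → ℝ) (φ : ℝ → ℝ) (j : ℤ)
    (hd1 : ∀ x : Conf, DifferentiableAt ℝ (fun t => F (update x j t)) (x j))
    (hφ : Differentiable ℝ φ) :
    pd (fun x => F x + φ (x j)) j = fun x => pd F j x + deriv φ (x j) := by
  funext x
  unfold pd
  simp only [update_self]
  rw [deriv_fun_add (hd1 x) (hφ.differentiableAt)]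

lemma pd_add_comp_ne (F : Conf → ℝ) (φ : ℝ → ℝ) (j i : ℤ) (hij : i ≠ j) :
    pd (fun x => F x + φ (x j)) i = pd F i := by
  funext x
  unfold pd
  simp only [Function.update_of_ne (Ne.symm hij)]
  rw [deriv_add_const]


end FirstPert
namespace FirstPert
open Function

lemma Sj_submod (r : ℕ) (C : ℝ) (S : ℤ → Conf → ℝ) (hS : SatisfiesAE r C S)
    (j : ℤ) (a b : Conf) :
    S j (a ⊓ b) + S j (a ⊔ b) ≤ S j a + S j b := by
  classical
  set D : Finset ℤ := Finset.Icc (j - (r:ℤ)) (j + (r:ℤ)) with hD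
  have hmem : ∀ n : ℤ, n ∈ D ↔ |n - j| ≤ (r:ℤ) := by
    intro n
    rw [hD, Finset.mem_Icc, abs_le]
    omega
  set b' : Conf := fun n => if n ∈ D then b n else a n with hb'
  have h1 : S j b' = S j b := by
    apply hS.finRange j b' b
    intro i hi
    simp only [hb', if_pos ((hmem i).mpr hi)]
  have h2 : S j (a ⊓ b') = S j (a ⊓ b) := by
    apply hS.finRange
    intro i hi
    simp only [Pi.inf_apply, hb', if_pos ((hmem i).mpr hi)]
  have h3 : S j (a ⊔ b') = S j (a ⊔ b) := by
    apply hS.finRange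
    intro i hi
    simp only [Pi.sup_apply, hb', if_pos ((hmem i).mpr hi)]
  have hdiff : ∀ m, m ∉ D → a m = b' m := by
    intro m hm
    simp only [hb', if_neg hm]
  have key := submod_aux (F := S j) (fun i x => hS.diff1 j i x) (fun i k x => hS.diff2 j i k x)
    (fun i k hik x => hS.mono j i k hik x) D a b' hdiff
  rw [h1, h2, h3] at key
  exact key

lemma W_submod (r : ℕ) (C : ℝ) (S : ℤ → Conf → ℝ) (hS : SatisfiesAE r C S) (n : ℕ)
    (a b : Conf) :
    Wper S n (a ⊓ b) + Wper S n (a ⊔ b) ≤ Wper S n a + Wper S n b := by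
  unfold Wper
  rw [← Finset.sum_add_distrib, ← Finset.sum_add_distrib]
  exact Finset.sum_le_sum (fun j _ => Sj_submod r C S hS j a b)

lemma pert_close (S : ℤ → Conf → ℝ) (g : ℝ → ℝ) (hg : ContDiff ℝ (⊤:ℕ∞) g) (k : ℕ) (ε3 : ℝ)
    (hε3 : 0 ≤ ε3) (hgb : ∀ n, n ≤ k → ∀ t, |deriv^[n] g t| ≤ ε3) (j : ℤ) :
    CkClose k ε3 (fun x => S j x + g (x j)) (S j) := by
  intro L hL x
  have e : (fun y : Conf => (S j y + g (y j)) - S j y) = fun y => g (y j) := by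
    funext y; ring
  rw [e]
  rcases pdList_comp_eval hg j L with h | h
  · rw [h]; exact hgb L.length hL (x j)
  · rw [h]; simpa using hε3

lemma pert_AE (r : ℕ) (C : ℝ) (S : ℤ → Conf → ℝ) (hS : SatisfiesAE r C S)
    (g : ℝ → ℝ) (hg : ContDiff ℝ (⊤:ℕ∞) g) (hg0 : ∀ t, 0 ≤ g t)
    (hgper : ∀ (t : ℝ) (l : ℤ), g (t + l) = g t)
    (ε3 : ℝ) (hε3 : 0 < ε3)
    (hg1 : ∀ t, |deriv g t| ≤ ε3) (hg2 : ∀ t, |deriv (deriv g) t| ≤ ε3) :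
    SatisfiesAE r (C + ε3) (fun j x => S j x + g (x j)) := by
  have hdg : Differentiable ℝ g := hg.differentiable (by simp)
  have hCdg : ContDiff ℝ (⊤:ℕ∞) (deriv g) := by
    have := contDiff_iterate_deriv hg 1
    rwa [Function.iterate_one] at this
  have hddg : Differentiable ℝ (deriv g) := hCdg.differentiable (by simp)
  have hCddg : Continuous (deriv (deriv g)) := by
    have := contDiff_iterate_deriv hg 2
    have e : deriv^[2] g = deriv (deriv g) := by
      rw [show (2:ℕ) = 1 + 1 from rfl, Function.iterate_succ_apply', Function.iterate_one]
    rw [e] at this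
    exact this.continuous
  have hpd1 : ∀ j i : ℤ, pd (fun x : Conf => S j x + g (x j)) i
      = fun x => pd (S j) i x + (if i = j then deriv g (x j) else 0) := by
    intro j i
    by_cases hij : i = j
    · subst hij
      rw [pd_add_comp_same (S i) g i (fun x => hS.diff1 i i x) hdg]
      funext x
      rw [if_pos rfl]
    · rw [pd_add_comp_ne (S j) g j i hij]
      funext x
      rw [if_neg hij, add_zero]
  have hpd1same : ∀ j : ℤ, pd (fun x : Conf => S j x + g (x j)) j
      = fun x => pd (S j) j x + deriv g (x j) := by
    intro j
    rw [hpd1 j j]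
    funext x
    rw [if_pos rfl]
  have hpd1ne : ∀ j i : ℤ, i ≠ j → pd (fun x : Conf => S j x + g (x j)) i = pd (S j) i := by
    intro j i hij
    rw [hpd1 j i]
    funext x
    rw [if_neg hij, add_zero]
  have hpd2 : ∀ j i k0 : ℤ, pd (pd (fun x : Conf => S j x + g (x j)) i) k0
      = fun x => pd (pd (S j) i) k0 x + (if i = j ∧ k0 = j then deriv (deriv g) (x j) else 0) := by
    intro j i k0
    by_cases hij : i = j
    · subst hij
      rw [hpd1same i]
      by_cases hkj : k0 = i
      · subst hkj
        rw [pd_add_comp_same (pd (S k0) k0) (deriv g) k0 (fun x => hS.diff2 k0 k0 k0 x) hddg]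
        funext x
        rw [if_pos ⟨rfl, rfl⟩]
      · rw [pd_add_comp_ne (pd (S i) i) (deriv g) i k0 hkj]
        funext x
        rw [if_neg (fun h => hkj h.2), add_zero]
    · rw [hpd1ne j i hij]
      funext x
      rw [if_neg (fun h => hij h.1), add_zero]
  constructor
  · exact hS.r_pos
  · have := hS.C_pos; linarith
  · -- finRange
    intro j x y h
    have h1 := hS.finRange j x y h
    have h2 : x j = y j := h j (by simp)
    rw [h1, h2]
  · -- contS
    intro j
    exact (hS.contS j).add ((hg.continuous).comp (continuous_apply j))
  · -- diff1
    intro j i x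
    by_cases hij : i = j
    · subst hij
      simp only [update_self]
      exact (hS.diff1 i i x).add (hdg.differentiableAt)
    · simp only [Function.update_of_ne (Ne.symm hij)]
      exact (hS.diff1 j i x).add_const _
  · -- diff2
    intro j i k0 x
    by_cases hij : i = j
    · subst hij
      rw [hpd1same i]
      simp only
      by_cases hkj : k0 = i
      · subst hkj
        simp only [update_self]
        exact (hS.diff2 k0 k0 k0 x).add (hddg.differentiableAt)
      · simp only [Function.update_of_ne (Ne.symm hkj)]
        exact (hS.diff2 i i k0 x).add_const _
    · rw [hpd1ne j i hij]
      exact hS.diff2 j i k0 x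
  · -- cont1
    intro j i
    rw [hpd1 j i]
    apply (hS.cont1 j i).add
    by_cases hij : i = j
    · simp only [if_pos hij]
      exact (hCdg.continuous).comp (continuous_apply j)
    · simp only [if_neg hij]
      exact continuous_const
  · -- cont2
    intro j i k0
    rw [hpd2 j i k0]
    apply (hS.cont2 j i k0).add
    by_cases h : i = j ∧ k0 = j
    · simp only [if_pos h]
      exact hCddg.comp (continuous_apply j)
    · simp only [if_neg h]
      exact continuous_const
  · -- shiftInv
    intro j k0 l x
    have h1 := hS.shiftInv j k0 l x
    have h2 : tau k0 l x (j + k0) = x j + (l:ℝ) := by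
      unfold tau
      congr 2
      ring
    rw [h1, h2, hgper (x j) l]
  · -- coercive
    intro j k0 hk M
    obtain ⟨R, hR⟩ := hS.coercive j k0 hk M
    exact ⟨R, fun x hx => le_add_of_le_of_nonneg (hR x hx) (hg0 (x j))⟩
  · -- mono
    intro j i k0 hik x
    have h := congrFun (hpd2 j i k0) x
    rw [h]
    have : ¬ (i = j ∧ k0 = j) := by
      rintro ⟨h1, h2⟩
      exact hik (h1.trans h2.symm)
    rw [if_neg this, add_zero]
    exact hS.mono j i k0 hik x
  · -- monoStrict
    intro j k0 hjk x
    have h := congrFun (hpd2 j j k0) x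
    rw [h]
    have : ¬ ((j:ℤ) = j ∧ k0 = j) := by
      rintro ⟨_, h2⟩
      rw [h2] at hjk
      simp at hjk
    rw [if_neg this, add_zero]
    exact hS.monoStrict j k0 hjk x
  · -- bdd1
    intro j i x
    have h := congrFun (hpd1 j i) x
    rw [h]
    apply (abs_add_le _ _).trans
    apply add_le_add (hS.bdd1 j i x)
    by_cases hij : i = j
    · rw [if_pos hij]; exact hg1 (x j)
    · rw [if_neg hij]; simp; linarith
  · -- bdd2
    intro j i k0 x
    have h := congrFun (hpd2 j i k0) x
    rw [h]
    apply (abs_add_le _ _).trans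
    apply add_le_add (hS.bdd2 j i k0 x)
    by_cases hc : i = j ∧ k0 = j
    · rw [if_pos hc]; exact hg2 (x j)
    · rw [if_neg hc]; simp; linarith

end FirstPert
namespace FirstPert

lemma int_periodic_mod (F : ℤ → ℝ) (p : ℕ) (hp : 1 ≤ p)
    (hper : ∀ j, F (j + (p:ℤ)) = F j) (j : ℤ) :
    F j = F (j % (p:ℤ)) := by
  have key : ∀ t : ℤ, ∀ s : ℤ, F (s + (p:ℤ) * t) = F s := by
    intro t
    induction t using Int.induction_on with
    | zero => intro s; simp
    | succ t ih =>
      intro s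
      have e : s + (p:ℤ)*((t:ℤ)+1) = (s + (p:ℤ)*(t:ℤ)) + (p:ℤ) := by ring
      rw [e, hper, ih]
    | pred t ih =>
      intro s
      have e : s + (p:ℤ)*(-(t:ℤ)-1) = (s + (p:ℤ)*(-(t:ℤ))) - (p:ℤ) := by ring
      rw [e]
      have h2 := hper ((s + (p:ℤ)*(-(t:ℤ))) - (p:ℤ))
      rw [sub_add_cancel] at h2
      rw [← h2, ih]
  have e := Int.emod_add_mul_ediv j (p:ℤ)
  calc F j = F (j % (p:ℤ) + (p:ℤ) * (j / (p:ℤ))) := by rw [e]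
    _ = F (j % (p:ℤ)) := key (j / (p:ℤ)) (j % (p:ℤ))

lemma cyclic_multiset (M : ℕ) (z : ℕ → Conf) (i : ℤ) (hzM : z M = z 0) :
    Multiset.map (fun m => z (m+1) i) (Multiset.range M)
      = Multiset.map (fun m => z m i) (Multiset.range M) := by
  have hr : Multiset.range (M+1) = 0 ::ₘ Multiset.map Nat.succ (Multiset.range M) := by
    have h := List.range_succ_eq_map (n := M)
    have e1 : Multiset.range (M+1) = ((List.range (M+1) : List ℕ) : Multiset ℕ) := rfl
    have e2 : Multiset.range M = ((List.range M : List ℕ) : Multiset ℕ) := rfl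
    rw [e1, h, e2]
    rfl
  have h1 : Multiset.map (fun m => z m i) (Multiset.range (M+1))
      = (z 0 i) ::ₘ Multiset.map (fun m => z (m+1) i) (Multiset.range M) := by
    rw [hr, Multiset.map_cons, Multiset.map_map]
    rfl
  have h2 : Multiset.map (fun m => z m i) (Multiset.range (M+1))
      = (z M i) ::ₘ Multiset.map (fun m => z m i) (Multiset.range M) := by
    rw [Multiset.range_succ, Multiset.map_cons]
  rw [h1, hzM] at h2
  exact (Multiset.cons_inj_right _).mp h2

end FirstPert

open FirstPert

/-- First perturbation: for `ω` irrational with `q/p < ω < (q+1)/p` and a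
`(p,q)`-periodic Birkhoff minimizer `y^min`, there are potentials `S^{ε,1}` satisfying A-E,
`C^k`-`ε/3`-close to the `S_j`, and a `ξ ∈ ℝ`, such that any `(Mp,Mq)`-periodic configuration
visiting `[ξ, ξ + 1/(2p)]` (mod 1) at `N` sites pays action excess at least
`Nε/(3 C_k p^k)`. -/
theorem first_perturbation
    (r : ℕ) (C : ℝ) (S : ℤ → (ℤ → ℝ) → ℝ) (hS : SatisfiesAE r C S)
    (ω : ℝ) (hω : Irrational ω) (p : ℕ) (hp : 1 ≤ p) (q : ℤ)
    (h1 : (q : ℝ) / (p : ℝ) < ω) (h2 : ω < ((q : ℝ) + 1) / (p : ℝ))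
    (ymin : ℤ → ℝ) (hymin : PerMin S p q ymin) (hyB : Birkhoff ymin)
    (ε : ℝ) (hε : 0 < ε) (k : ℕ) (hk : 2 ≤ k) :
    ∃ Ck : ℝ, 0 < Ck ∧
    ∃ Sε1 : ℤ → (ℤ → ℝ) → ℝ,
      (∃ C' : ℝ, SatisfiesAE r C' Sε1) ∧
      (∀ j : ℤ, CkClose k (ε / 3) (Sε1 j) (S j)) ∧
      ∃ ξ : ℝ, ∀ M : ℕ, 1 ≤ M → ∀ x : ℤ → ℝ, tau ((M * p : ℕ) : ℤ) ((M : ℤ) * q) x = x →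
        ∀ N : ℕ, ∀ ks ls : Fin N → ℤ, StrictMono ks →
          (∀ i : Fin N, 0 ≤ ks i ∧ ks i < ((M * p : ℕ) : ℤ)) →
          (∀ i : Fin N, ξ ≤ x (ks i) + (ls i : ℝ) ∧
            x (ks i) + (ls i : ℝ) ≤ ξ + 1 / (2 * (p : ℝ))) →
          Wper Sε1 (M * p) ymin + (N : ℝ) * ε / (3 * Ck * (p : ℝ) ^ k) ≤ Wper Sε1 (M * p) x := by
  classical
  have hp1 : (1:ℝ) ≤ (p:ℝ) := by exact_mod_cast hp
  have hppos : (0:ℝ) < (p:ℝ) := by linarith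
  -- choose the center c of the bump via pigeonhole
  set T : Finset ℝ := (Finset.range p).image (fun j0 : ℕ => Int.fract (ymin (j0:ℤ))) with hT
  have hTcard : T.card ≤ p := by
    rw [hT]
    exact le_trans Finset.card_image_le (le_of_eq (Finset.card_range p))
  obtain ⟨c, hc⟩ := exists_center p hp T hTcard
  -- periodicity of ymin mod 1
  have hymin_step : ∀ j : ℤ, ymin (j + (p:ℤ)) = ymin j + (q:ℝ) := by
    intro j
    have h := congrFun hymin.1 (j + (p:ℤ))
    unfold tau at h
    rw [add_sub_cancel_right] at h
    linarith
  have hFper : ∀ j : ℤ, Int.fract (ymin (j + (p:ℤ)) - c) = Int.fract (ymin j - c) := by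
    intro j
    rw [hymin_step j, show ymin j + (q:ℝ) - c = (ymin j - c) + ((q:ℤ):ℝ) from by push_cast; ring]
    exact Int.fract_add_intCast _ _
  have hFgood : ∀ j : ℤ, 3/(8*(p:ℝ)) ≤ Int.fract (ymin j - c) ∧
      Int.fract (ymin j - c) ≤ 1 - 3/(8*(p:ℝ)) := by
    intro j
    have hred := int_periodic_mod (fun j => Int.fract (ymin j - c)) p hp hFper j
    set j0 : ℤ := j % (p:ℤ) with hj0
    have hppos' : (0:ℤ) < (p:ℤ) := by exact_mod_cast hp
    have hj0nn : 0 ≤ j0 := Int.emod_nonneg j (by omega)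
    have hj0lt : j0 < (p:ℤ) := Int.emod_lt_of_pos j hppos'
    have hj0nat : ((j0.toNat : ℤ)) = j0 := Int.toNat_of_nonneg hj0nn
    have hmemT : Int.fract (ymin j0) ∈ T := by
      rw [hT]
      apply Finset.mem_image.mpr
      refine ⟨j0.toNat, Finset.mem_range.mpr ?_, by rw [hj0nat]⟩
      have : (j0.toNat : ℤ) < (p:ℤ) := by rw [hj0nat]; exact hj0lt
      exact_mod_cast this
    have hgood := hc _ hmemT
    rw [isGood] at hgood
    have hff : Int.fract (Int.fract (ymin j0) - c) = Int.fract (ymin j0 - c) := by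
      have e0 : Int.fract (ymin j0) - c = (ymin j0 - c) - ((⌊ymin j0⌋:ℤ):ℝ) := by
        have := Int.floor_add_fract (ymin j0)
        linarith
      rw [e0]
      exact Int.fract_sub_intCast _ _
    rw [hred, ← hff]
    exact hgood
  -- the bump function
  have hg0cd := gbase_contDiff (p := p) c hp
  have hg0per := gbase_periodic (p := p) c
  obtain ⟨Bg, hBg1, hBg⟩ := bounds_up_to hg0cd hg0per k
  have hBgpos : (0:ℝ) < Bg := by linarith
  set δ : ℝ := (ε/3)/Bg with hδ
  have hδpos : 0 < δ := by positivity
  set g : ℝ → ℝ := fun t => δ * gbase p c t with hgdef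
  have hgcd : ContDiff ℝ (⊤:ℕ∞) g := contDiff_const.mul hg0cd
  have hgb : ∀ n, n ≤ k → ∀ t, |deriv^[n] g t| ≤ ε/3 := by
    intro n hn t
    rw [hgdef, iterate_deriv_const_mul hg0cd δ n]
    simp only
    rw [abs_mul, abs_of_pos hδpos]
    calc δ * |deriv^[n] (gbase p c) t| ≤ δ * Bg :=
          mul_le_mul_of_nonneg_left (hBg n hn t) hδpos.le
      _ = ε/3 := by rw [hδ]; field_simp
  have hgnonneg : ∀ t, 0 ≤ g t := fun t => mul_nonneg hδpos.le (gbase_nonneg c t)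
  have hgint : ∀ (t:ℝ) (l:ℤ), g (t + l) = g t := by
    intro t l
    rw [hgdef]
    simp only
    rw [gbase_int_period c t l]
  have hgymin : ∀ j : ℤ, g (ymin j) = 0 := by
    intro j
    rw [hgdef]
    simp only
    rw [gbase_vanish c hp (ymin j) (hFgood j), mul_zero]
  have e4p : 1/(2*(p:ℝ)) - 1/(4*(p:ℝ)) = 1/(4*(p:ℝ)) := by field_simp; ring
  have hgplateau : ∀ t : ℝ, (c - 1/(4*(p:ℝ))) ≤ t →
      t ≤ (c - 1/(4*(p:ℝ))) + 1/(2*(p:ℝ)) → g t = δ := by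
    intro t ht1 ht2
    rw [hgdef]
    simp only
    rw [gbase_plateau c hp t ?_, mul_one]
    rw [abs_le]
    constructor <;> linarith
  -- the perturbed potentials
  have hAE : SatisfiesAE r (C + ε/3) (fun j x => S j x + g (x j)) := by
    apply pert_AE r C S hS g hgcd hgnonneg hgint (ε/3) (by linarith)
    · intro t
      have := hgb 1 (by omega) t
      rwa [Function.iterate_one] at this
    · intro t
      have := hgb 2 hk t
      exact this
  refine ⟨ε/(3*δ*(p:ℝ)^k), by positivity, (fun j x => S j x + g (x j)),
    ⟨C + ε/3, hAE⟩, fun j => pert_close S g hgcd k (ε/3) (by linarith) hgb j,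
    c - 1/(4*(p:ℝ)), ?_⟩
  intro M hM x hx N ks ls hksmono hksrange hwin
  have hMp1 : 1 ≤ M * p := Nat.one_le_iff_ne_zero.mpr (by positivity)
  have hMpos : (0:ℝ) < (M:ℝ) := by exact_mod_cast hM
  -- translates
  set z : ℕ → FirstPert.Conf := fun m => tau ((m:ℤ)*(p:ℤ)) ((m:ℤ)*q) x with hz
  have hz0 : z 0 = x := by
    funext i
    rw [hz]
    unfold tau
    push_cast
    simp
  have hzrec : ∀ (m:ℕ) (i:ℤ), z m (i - (p:ℤ)) + (q:ℝ) = z (m+1) i := by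
    intro m i
    rw [hz]
    unfold tau
    push_cast
    rw [show i - (p:ℤ) - (m:ℤ)*(p:ℤ) = i - ((m:ℤ)+1)*(p:ℤ) from by ring]
    ring
  have hzM : z M = x := by
    funext i
    rw [hz]
    unfold tau
    have h := congrFun hx i
    unfold tau at h
    push_cast at h ⊢
    convert h using 3 <;> ring
  -- W S (Mp) (z m) = W S (Mp) x
  have hfper : ∀ j : ℤ, S (j + ((M*p:ℕ):ℤ)) x = S j x := by
    intro j
    have h := hS.shiftInv j ((M*p:ℕ):ℤ) ((M:ℤ)*q) x
    rw [hx] at h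
    exact h.symm
  have hWz : ∀ m : ℕ, Wper S (M*p) (z m) = Wper S (M*p) x := by
    intro m
    have hterm : ∀ j : ℤ, S j (z m) = S (j - (m:ℤ)*(p:ℤ)) x := by
      intro j
      have h := hS.shiftInv (j - (m:ℤ)*(p:ℤ)) ((m:ℤ)*(p:ℤ)) ((m:ℤ)*q) x
      rw [sub_add_cancel] at h
      rw [hz]
      exact h.symm
    unfold Wper
    rw [Finset.sum_congr rfl (fun j _ => hterm j)]
    have hmap := Finset.sum_map (Finset.Icc (1:ℤ) ((M*p:ℕ):ℤ))
      (addRightEmbedding (-((m:ℤ)*(p:ℤ)))) (fun j => S j x)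
    rw [Finset.map_add_right_Icc] at hmap
    simp only [addRightEmbedding_apply] at hmap
    rw [show (1:ℤ) + -((m:ℤ)*(p:ℤ)) = 1 - (m:ℤ)*(p:ℤ) from by ring,
        show ((M*p:ℕ):ℤ) + -((m:ℤ)*(p:ℤ)) = ((M*p:ℕ):ℤ) - (m:ℤ)*(p:ℤ) from by ring] at hmap
    simp only [sub_eq_add_neg]
    rw [← hmap]
    have hwin' := periodic_sum_window (fun j => S j x) (M*p) hfper ((m:ℤ)*(p:ℤ))
    simp only [sub_eq_add_neg] at hwin'
    exact hwin'
  -- submodularity of W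
  have hsub : ∀ a b : FirstPert.Conf, Wper S (M*p) (a ⊓ b) + Wper S (M*p) (a ⊔ b)
      ≤ Wper S (M*p) a + Wper S (M*p) b := fun a b => W_submod r C S hS (M*p) a b
  have hsum := sortN_sum_le (W := Wper S (M*p)) hsub M z
  have hzsum : ∑ m ∈ Finset.range M, Wper S (M*p) (z m) = (M:ℝ) * Wper S (M*p) x := by
    rw [Finset.sum_congr rfl (fun m _ => hWz m), Finset.sum_const, Finset.card_range,
      nsmul_eq_mul]
  -- each sorted configuration is (p,q)-periodic
  have hτu : ∀ s, s < M → tau (p:ℤ) q (sortN M z s) = sortN M z s := by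
    intro s hs
    funext i
    show sortN M z s (i - (p:ℤ)) + (q:ℝ) = sortN M z s i
    have w1mono : ∀ s1 t1 : ℕ, s1 ≤ t1 → t1 < M →
        sortN M z s1 (i - (p:ℤ)) + (q:ℝ) ≤ sortN M z t1 (i - (p:ℤ)) + (q:ℝ) := by
      intro s1 t1 h1 h2
      have := sortN_mono M z (i - (p:ℤ)) s1 t1 h1 h2
      linarith
    have w2mono : ∀ s1 t1 : ℕ, s1 ≤ t1 → t1 < M →
        sortN M z s1 i ≤ sortN M z t1 i := fun s1 t1 h1 h2 => sortN_mono M z i s1 t1 h1 h2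
    have hms : Multiset.map (fun s => sortN M z s (i - (p:ℤ)) + (q:ℝ)) (Multiset.range M)
        = Multiset.map (fun s => sortN M z s i) (Multiset.range M) := by
      calc Multiset.map (fun s => sortN M z s (i - (p:ℤ)) + (q:ℝ)) (Multiset.range M)
          = Multiset.map (fun a => a + (q:ℝ))
              (Multiset.map (fun s => sortN M z s (i - (p:ℤ))) (Multiset.range M)) := by
            rw [Multiset.map_map]; rfl
        _ = Multiset.map (fun a => a + (q:ℝ))
              (Multiset.map (fun m => z m (i - (p:ℤ))) (Multiset.range M)) := by
            rw [sortN_multiset M z (i - (p:ℤ))]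
        _ = Multiset.map (fun m => z m (i - (p:ℤ)) + (q:ℝ)) (Multiset.range M) := by
            rw [Multiset.map_map]; rfl
        _ = Multiset.map (fun m => z (m+1) i) (Multiset.range M) :=
            Multiset.map_congr rfl (fun m _ => hzrec m i)
        _ = Multiset.map (fun m => z m i) (Multiset.range M) :=
            cyclic_multiset M z i (hzM.trans hz0.symm)
        _ = Multiset.map (fun s => sortN M z s i) (Multiset.range M) :=
            (sortN_multiset M z i).symm
    exact sorted_unique M _ _ w1mono w2mono hms s hs
  -- action of sorted configurations
  have hWu : ∀ s, s < M → Wper S (M*p) ymin ≤ Wper S (M*p) (sortN M z s) := by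
    intro s hs
    have hu := hτu s hs
    have hperu : ∀ j : ℤ, S (j + (p:ℤ)) (sortN M z s) = S j (sortN M z s) := by
      intro j
      have h := hS.shiftInv j (p:ℤ) q (sortN M z s)
      rw [hu] at h
      exact h.symm
    have hymper : ∀ j : ℤ, S (j + (p:ℤ)) ymin = S j ymin := by
      intro j
      have h := hS.shiftInv j (p:ℤ) q ymin
      rw [hymin.1] at h
      exact h.symm
    have e1 : Wper S (M*p) (sortN M z s) = (M:ℝ) * Wper S p (sortN M z s) :=
      periodic_sum_mult (fun j => S j (sortN M z s)) p hperu M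
    have e2 : Wper S (M*p) ymin = (M:ℝ) * Wper S p ymin :=
      periodic_sum_mult (fun j => S j ymin) p hymper M
    have e3 : Wper S p ymin ≤ Wper S p (sortN M z s) := hymin.2 _ hu
    rw [e1, e2]
    exact mul_le_mul_of_nonneg_left e3 (Nat.cast_nonneg M)
  have hssum : (M:ℝ) * Wper S (M*p) ymin ≤ ∑ s ∈ Finset.range M, Wper S (M*p) (sortN M z s) := by
    calc (M:ℝ) * Wper S (M*p) ymin = ∑ _s ∈ Finset.range M, Wper S (M*p) ymin := by
          rw [Finset.sum_const, Finset.card_range, nsmul_eq_mul]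
      _ ≤ _ := Finset.sum_le_sum (fun s hs => hWu s (Finset.mem_range.mp hs))
  have hA : Wper S (M*p) ymin ≤ Wper S (M*p) x := by
    have hh : (M:ℝ) * Wper S (M*p) ymin ≤ (M:ℝ) * Wper S (M*p) x := by
      calc (M:ℝ) * Wper S (M*p) ymin ≤ ∑ s ∈ Finset.range M, Wper S (M*p) (sortN M z s) := hssum
        _ ≤ ∑ m ∈ Finset.range M, Wper S (M*p) (z m) := hsum
        _ = (M:ℝ) * Wper S (M*p) x := hzsum
    exact le_of_mul_le_mul_left hh hMpos
  -- relating the perturbed and unperturbed actions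
  have hWeq : ∀ y : ℤ → ℝ, Wper (fun j x => S j x + g (x j)) (M*p) y
      = Wper S (M*p) y + ∑ j ∈ Finset.Icc (1:ℤ) ((M*p:ℕ):ℤ), g (y j) := by
    intro y
    unfold Wper
    rw [← Finset.sum_add_distrib]
  have hWymin : Wper (fun j x => S j x + g (x j)) (M*p) ymin = Wper S (M*p) ymin := by
    rw [hWeq ymin, Finset.sum_eq_zero (fun j _ => hgymin j), add_zero]
  -- counting the visits
  set ι : Fin N → ℤ := fun i => if ks i = 0 then ((M*p:ℕ):ℤ) else ks i with hι
  have hMpz : (1:ℤ) ≤ ((M*p:ℕ):ℤ) := by exact_mod_cast hMp1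
  have himg : ∀ i : Fin N, ι i ∈ Finset.Icc (1:ℤ) ((M*p:ℕ):ℤ) := by
    intro i
    simp only [hι, Finset.mem_Icc]
    obtain ⟨hk1, hk2⟩ := hksrange i
    by_cases h0 : ks i = 0
    · rw [if_pos h0]
      omega
    · rw [if_neg h0]
      constructor <;> omega
  have hinj : ∀ i ∈ (Finset.univ : Finset (Fin N)), ∀ i' ∈ (Finset.univ : Finset (Fin N)),
      ι i = ι i' → i = i' := by
    intro i _ i' _ heq
    simp only [hι] at heq
    have hkinj := hksmono.injective
    by_cases h0 : ks i = 0 <;> by_cases h0' : ks i' = 0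
    · exact hkinj (h0.trans h0'.symm)
    · rw [if_pos h0, if_neg h0'] at heq
      have := (hksrange i').2
      omega
    · rw [if_neg h0, if_pos h0'] at heq
      have := (hksrange i).2
      omega
    · rw [if_neg h0, if_neg h0'] at heq
      exact hkinj heq
  have hplat : ∀ i : Fin N, g (x (ks i)) = δ := by
    intro i
    obtain ⟨hw1, hw2⟩ := hwin i
    have := hgint (x (ks i)) (ls i)
    rw [← this]
    exact hgplateau _ hw1 hw2
  have hval : ∀ i : Fin N, g (x (ι i)) = δ := by
    intro i
    simp only [hι]
    by_cases h0 : ks i = 0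
    · rw [if_pos h0]
      have hxM : x ((M*p:ℕ):ℤ) = x 0 + (((M:ℤ)*q : ℤ):ℝ) := by
        have h := congrFun hx ((M*p:ℕ):ℤ)
        unfold tau at h
        rw [sub_self] at h
        exact h.symm
      rw [hxM, hgint (x 0) ((M:ℤ)*q), show (0:ℤ) = ks i from h0.symm]
      exact hplat i
    · rw [if_neg h0]
      exact hplat i
  have hcount : (N:ℝ) * δ ≤ ∑ j ∈ Finset.Icc (1:ℤ) ((M*p:ℕ):ℤ), g (x j) := by
    have hsubset : Finset.image ι Finset.univ ⊆ Finset.Icc (1:ℤ) ((M*p:ℕ):ℤ) := by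
      intro j hj
      obtain ⟨i, _, hij⟩ := Finset.mem_image.mp hj
      rw [← hij]
      exact himg i
    calc (N:ℝ) * δ = ∑ i : Fin N, δ := by
          rw [Finset.sum_const, Finset.card_univ, Fintype.card_fin, nsmul_eq_mul]
      _ = ∑ i : Fin N, g (x (ι i)) := by
          exact Finset.sum_congr rfl (fun i _ => (hval i).symm)
      _ = ∑ j ∈ Finset.image ι Finset.univ, g (x j) := by rw [Finset.sum_image hinj]
      _ ≤ ∑ j ∈ Finset.Icc (1:ℤ) ((M*p:ℕ):ℤ), g (x j) :=
          Finset.sum_le_sum_of_subset_of_nonneg hsubset (fun j _ _ => hgnonneg (x j))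
  -- final arithmetic
  have hpk : (0:ℝ) < (p:ℝ)^k := by positivity
  have hNδ : (N:ℝ) * ε / (3 * (ε/(3*δ*(p:ℝ)^k)) * (p:ℝ)^k) = (N:ℝ) * δ := by
    rw [show 3 * (ε/(3*δ*(p:ℝ)^k)) * (p:ℝ)^k = ε/δ from by field_simp]
    rw [div_div_eq_mul_div]
    field_simp
  rw [hWymin, hWeq x, hNδ]
  linarith [hA, hcount]
end
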